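/- arXiv:2604.03000 — 7 statements merged into one kernel-verified Lean document; each statement's English description precedes it below -/
import Mathlib

section
/- For any prime number p ≥ 5, the central-type binomial coefficient satisfies Wolstenholme's congruence: binomial(2p-1, p-1) ≡ 1 (mod p^3), i.e. p^3 divides binomial(2p-1, p-1) - 1 as integers. -/
open Finset

lemma six_sum_sq {R : Type*} [CommRing R] (n : ℕ) :
    (6 : R) * ∑ i ∈ range (n+1), (i : R)^2 = (n : R) * (n+1) * (2*n+1) := by
  induction n with
  | zero => simp
  | succ n ih =>
    rw [sum_range_succ, mul_add, ih]; push_cast; ring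

lemma sum_range_cast {M : Type*} [AddCommMonoid M] (p : ℕ) [NeZero p] (g : ZMod p → M) :
    ∑ k ∈ range p, g (k : ZMod p) = ∑ a : ZMod p, g a := by
  exact Finset.sum_nbij' (fun k => (k : ZMod p)) (fun a => a.val)
    (fun a _ => mem_univ _) (fun a _ => mem_range.2 (ZMod.val_lt a))
    (fun a ha => ZMod.val_cast_of_lt (mem_range.1 ha))
    (fun a _ => ZMod.natCast_rightInverse a) (fun a _ => rfl)

lemma sum_inv_sq_eq_zero (p : ℕ) (hp : p.Prime) (h5 : 5 ≤ p) :
    ∑ k ∈ range p, ((k : ZMod p)⁻¹)^2 = 0 := by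
  haveI : Fact p.Prime := ⟨hp⟩
  rw [sum_range_cast p (fun a => (a⁻¹)^2)]
  have hbij : Function.Bijective (fun a : ZMod p => a⁻¹) :=
    Function.Involutive.bijective (fun a => inv_inv a)
  rw [Fintype.sum_bijective _ hbij _ (fun a => a^2) (fun a => rfl)]
  rw [← sum_range_cast p (fun a => a^2)]
  have h6 : (6 : ZMod p) ≠ 0 := by
    have h6' : ((6 : ℕ) : ZMod p) ≠ 0 := by
      rw [Ne, ZMod.natCast_eq_zero_iff]
      intro h
      have hle := Nat.le_of_dvd (by norm_num) h
      interval_cases p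
      · revert h; decide
      · norm_num at hp
    simpa using h6'
  have key : (6 : ZMod p) * ∑ k ∈ range p, (k : ZMod p)^2 = 0 := by
    obtain ⟨q, rfl⟩ : ∃ q, p = q + 1 := ⟨p - 1, by omega⟩
    rw [six_sum_sq q]
    have hz : ((q : ZMod (q+1)) + 1) = 0 := by
      have h := ZMod.natCast_self (q+1)
      push_cast at h; linear_combination h
    linear_combination ((q : ZMod (q+1)) * (2*(q:ZMod (q+1))+1)) * hz
  exact (mul_eq_zero.1 key).resolve_left h6

lemma choose_sub_one_cast (p : ℕ) (hp : p.Prime) :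
    ∀ j, j < p → ((Nat.choose (p-1) j : ZMod p)) = (-1)^j := by
  intro j
  induction j with
  | zero => intro _; simp
  | succ j ih =>
    intro hj
    have hq : p - 1 + 1 = p := Nat.succ_pred_eq_of_pos hp.pos
    have pas : Nat.choose p (j+1) = Nat.choose (p-1) j + Nat.choose (p-1) (j+1) := by
      conv_lhs => rw [← hq]
      exact Nat.choose_succ_succ _ _
    have hdvd : ((Nat.choose p (j+1) : ℕ) : ZMod p) = 0 := by
      rw [ZMod.natCast_eq_zero_iff]
      exact hp.dvd_choose_self (Nat.succ_ne_zero j) hj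
    have hcast : ((Nat.choose (p-1) j : ℕ) : ZMod p) + ((Nat.choose (p-1) (j+1) : ℕ) : ZMod p) = 0 := by
      rw [← Nat.cast_add, ← pas, hdvd]
    rw [ih (by omega)] at hcast
    rw [pow_succ]
    linear_combination hcast

-- `k * (choose p k / p) ≡ (-1)^(k-1) [ZMod p]` for `1 ≤ k < p`
lemma ck_mul (p : ℕ) (hp : p.Prime) (k : ℕ) (hk1 : 1 ≤ k) (hkp : k < p) :
    ((Nat.choose p k / p : ℕ) : ZMod p) * (k : ZMod p) = (-1)^(k-1) := by
  have hdvd : p ∣ Nat.choose p k := hp.dvd_choose_self (by omega) hkp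
  have key : Nat.choose p k * k = p * Nat.choose (p-1) (k-1) := by
    have h1 : p - 1 + 1 = p := Nat.succ_pred_eq_of_pos hp.pos
    have h2 : k - 1 + 1 = k := Nat.succ_pred_eq_of_pos hk1
    have := Nat.add_one_mul_choose_eq (p-1) (k-1)
    rw [h1, h2] at this
    omega
  have hckk : Nat.choose p k / p * k = Nat.choose (p-1) (k-1) := by
    obtain ⟨c, hc⟩ := hdvd
    rw [hc, Nat.mul_div_cancel_left _ hp.pos]
    have : p * c * k = p * Nat.choose (p-1) (k-1) := by rw [← hc]; exact key
    have := Nat.eq_of_mul_eq_mul_left hp.pos (by linarith [this] : p * (c * k) = p * Nat.choose (p-1) (k-1))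
    omega
  calc ((Nat.choose p k / p : ℕ) : ZMod p) * (k : ZMod p)
      = ((Nat.choose p k / p * k : ℕ) : ZMod p) := by push_cast; ring
    _ = ((Nat.choose (p-1) (k-1) : ℕ) : ZMod p) := by rw [hckk]
    _ = (-1)^(k-1) := choose_sub_one_cast p hp (k-1) (by omega)


/-- Wolstenholme's theorem: for any prime `p ≥ 5`,
`binomial(2p-1, p-1) ≡ 1 (mod p^3)`. -/
theorem wolstenholme (p : ℕ) (hp : p.Prime) (h5 : 5 ≤ p) :
    (p : ℤ) ^ 3 ∣ ((Nat.choose (2 * p - 1) (p - 1) : ℤ) - 1) := by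
  haveI : Fact p.Prime := ⟨hp⟩
  set ck : ℕ → ℕ := fun k => Nat.choose p k / p with hck
  -- p divides the sum of squares of ck
  have hdvdM : p ∣ ∑ k ∈ Ico 1 p, (ck k)^2 := by
    rw [← ZMod.natCast_eq_zero_iff]
    push_cast
    have hterm : ∀ k ∈ Ico 1 p, ((ck k : ℕ) : ZMod p)^2 = ((k : ZMod p)⁻¹)^2 := by
      intro k hk
      rw [mem_Ico] at hk
      have hkne : (k : ZMod p) ≠ 0 := by
        rw [Ne, ZMod.natCast_eq_zero_iff]
        intro h; have := Nat.le_of_dvd (by omega) h; omega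
      have h1 := ck_mul p hp k hk.1 hk.2
      have h2 : ((ck k : ℕ) : ZMod p)^2 * (k : ZMod p)^2 = 1 := by
        have : (((ck k : ℕ) : ZMod p) * (k : ZMod p))^2 = ((-1 : ZMod p)^(k-1))^2 := by rw [h1]
        rw [mul_pow] at this
        rw [this, ← pow_mul, pow_mul', neg_one_sq, one_pow]
      have h3 : ((ck k : ℕ) : ZMod p)^2 = ((k : ZMod p)^2)⁻¹ :=
        eq_inv_of_mul_eq_one_left (by rw [mul_comm] at h2 ⊢; exact h2)
      rw [h3, ← inv_pow]
    rw [Finset.sum_congr rfl hterm]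
    have hsplit : ∑ k ∈ range p, ((k : ZMod p)⁻¹)^2
        = ((0 : ZMod p)⁻¹)^2 + ∑ k ∈ Ico 1 p, ((k : ZMod p)⁻¹)^2 := by
      rw [range_eq_Ico, Finset.sum_eq_sum_Ico_succ_bot hp.pos]
      norm_num
    have := sum_inv_sq_eq_zero p hp h5
    rw [hsplit] at this
    simpa using this
  -- choose p k = p * ck k on Ico 1 p, hence p^3 ∣ N
  have hN : ∑ k ∈ Ico 1 p, (Nat.choose p k)^2 = p^2 * ∑ k ∈ Ico 1 p, (ck k)^2 := by
    rw [Finset.mul_sum]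
    apply Finset.sum_congr rfl
    intro k hk
    rw [mem_Ico] at hk
    have hdvd : p ∣ Nat.choose p k := hp.dvd_choose_self (by omega) hk.2
    have : Nat.choose p k = p * ck k := (Nat.mul_div_cancel' hdvd).symm
    rw [this, mul_pow]
  have hdvdN : (p:ℤ)^3 ∣ (∑ k ∈ Ico 1 p, (Nat.choose p k)^2 : ℕ) := by
    obtain ⟨m, hm⟩ := hdvdM
    rw [hN, hm]
    push_cast
    exact ⟨m, by ring⟩
  -- Vandermonde: choose (2p) p = N + 2
  have hvan : Nat.choose (2*p) p = (∑ k ∈ Ico 1 p, (Nat.choose p k)^2) + 2 := by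
    have h1 : Nat.choose (2*p) p = ∑ k ∈ range (p+1), Nat.choose p k * Nat.choose p (p - k) := by
      rw [two_mul, Nat.add_choose_eq]
      exact Nat.sum_antidiagonal_eq_sum_range_succ_mk _ p
    have h2 : ∀ k ∈ range (p+1), Nat.choose p k * Nat.choose p (p - k) = Nat.choose p k ^ 2 := by
      intro k hk
      rw [mem_range] at hk
      rw [Nat.choose_symm (by omega), sq]
    rw [h1, Finset.sum_congr rfl h2, Finset.sum_range_succ, Nat.choose_self,
      range_eq_Ico, Finset.sum_eq_sum_Ico_succ_bot hp.pos]
    simp [Nat.choose_zero_right]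
    omega
  -- choose (2p) p = 2 * choose (2p-1) (p-1)
  have hdouble : Nat.choose (2*p) p = 2 * Nat.choose (2*p-1) (p-1) := by
    obtain ⟨q, rfl⟩ : ∃ q, p = q + 1 := ⟨p - 1, by omega⟩
    have e1 : 2*(q+1) = (2*q+1) + 1 := by ring
    have e2 : 2*(q+1) - 1 = 2*q+1 := by omega
    have e3 : q + 1 - 1 = q := by omega
    rw [e2, e3, e1, Nat.choose_succ_succ, Nat.choose_symm_half]
    omega
  -- conclude
  have key : (p:ℤ)^3 ∣ 2 * ((Nat.choose (2*p-1) (p-1) : ℤ) - 1) := by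
    have : 2 * ((Nat.choose (2*p-1) (p-1) : ℤ) - 1)
        = (∑ k ∈ Ico 1 p, (Nat.choose p k)^2 : ℕ) := by
      have := hvan
      rw [hdouble] at this
      push_cast [this]
      linarith [this]
    rw [this]
    exact hdvdN
  have hcop : IsCoprime ((p:ℤ)^3) 2 := by
    have h1 : Nat.Coprime p 2 := (Nat.coprime_primes hp Nat.prime_two).2 (by omega)
    exact (Nat.isCoprime_iff_coprime.2 h1).pow_left
  exact hcop.dvd_of_dvd_mul_left key
end

section
/- For any prime p ≥ 5, the harmonic number H_{p-1} = ∑_{k=1}^{p-1} 1/k (a rational number) satisfies H_{p-1} ≡ 0 (mod p^2) in the sense that either H_{p-1} = 0 or its p-adic valuation is at least 2: padicValRat p (H_{p-1}) ≥ 2. -/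
open Finset

namespace WolstenholmeAux

variable {p : ℕ}

lemma coprime_of_icc (hp : p.Prime) {k : ℕ} (hk : k ∈ Finset.Icc 1 (p - 1)) :
    Nat.Coprime k p := by
  simp only [Finset.mem_Icc] at hk
  have h2 := hp.two_le
  rw [Nat.coprime_comm, hp.coprime_iff_not_dvd]
  intro hdvd
  have := Nat.le_of_dvd (by omega) hdvd
  omega

lemma unit_sq (hp : p.Prime) {k : ℕ} (hk : k ∈ Finset.Icc 1 (p - 1)) :
    IsUnit (k : ZMod (p ^ 2)) := by
  rw [ZMod.isUnit_iff_coprime]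
  exact (coprime_of_icc hp hk).pow_right 2

/-- Sum of squares of units of `ZMod p` vanishes for `p ≥ 5`. -/
lemma sum_units_sq [Fact p.Prime] (h5 : 5 ≤ p) :
    ∑ x : (ZMod p)ˣ, ((x : ZMod p)) ^ 2 = 0 := by
  classical
  have := FiniteField.sum_pow_units (ZMod p) 2
  rw [ZMod.card] at this
  rw [this, if_neg]
  intro hdvd
  have := Nat.le_of_dvd (by norm_num) hdvd
  omega

/-- Transfer a sum over `Icc 1 (p-1)` to a sum over units of `ZMod p`. -/
lemma sum_icc_eq_sum_units [Fact p.Prime] {M : Type*} [AddCommMonoid M]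
    (f : ZMod p → M) :
    ∑ k ∈ Finset.Icc 1 (p - 1), f (k : ZMod p) = ∑ x : (ZMod p)ˣ, f x := by
  classical
  have hp : p.Prime := Fact.out
  refine Finset.sum_bij' (fun k hk => ZMod.unitOfCoprime k (coprime_of_icc hp hk))
    (fun x _ => (x : ZMod p).val) (fun k hk => Finset.mem_univ _)
    (fun x _ => ?_) (fun k hk => ?_) (fun x _ => ?_) (fun k hk => ?_)
  · -- val of unit is in Icc
    simp only [Finset.mem_Icc]
    constructor
    · have hx : ((x : ZMod p)) ≠ 0 := x.ne_zero
      have : (x : ZMod p).val ≠ 0 := by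
        intro h; apply hx; rw [← ZMod.natCast_zmod_val (x : ZMod p), h, Nat.cast_zero]
      omega
    · have := ZMod.val_lt (x : ZMod p)
      omega
  · -- j (i k) = k
    simp only [Finset.mem_Icc] at hk
    simp [ZMod.coe_unitOfCoprime, ZMod.val_natCast_of_lt (by omega : k < p)]
  · -- i (j x) = x
    ext
    simp [ZMod.coe_unitOfCoprime, ZMod.natCast_zmod_val]
  · -- values agree
    rw [ZMod.coe_unitOfCoprime]

end WolstenholmeAux


namespace WolstenholmeAux

variable {p : ℕ}

/-- Wolstenholme modulo `p^2` in `ZMod (p^2)` form. -/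
lemma sum_inv_zero [Fact p.Prime] (h5 : 5 ≤ p) :
    ∑ k ∈ Finset.Icc 1 (p - 1), ((k : ZMod (p ^ 2)))⁻¹ = 0 := by
  have hp : p.Prime := Fact.out
  haveI : NeZero (p ^ 2) := ⟨pow_ne_zero 2 hp.pos.ne'⟩
  classical
  set S := ∑ k ∈ Finset.Icc 1 (p - 1), ((k : ZMod (p ^ 2)))⁻¹ with hS
  set T := ∑ k ∈ Finset.Icc 1 (p - 1), (((k * (p - k) : ℕ)) : ZMod (p ^ 2))⁻¹ with hT
  -- reversal
  have hrev : S = ∑ k ∈ Finset.Icc 1 (p - 1), (((p - k : ℕ) : ZMod (p ^ 2)))⁻¹ := by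
    rw [hS]
    refine Finset.sum_bij' (fun k _ => p - k) (fun k _ =>p - k) ?_ ?_ ?_ ?_ ?_ <;>
      intro k hk <;> simp only [Finset.mem_Icc] at hk ⊢
    · omega
    · omega
    · omega
    · omega
    · have : p - (p - k) = k := by omega
      rw [this]
  -- the pairing identity
  have key : ∀ k ∈ Finset.Icc 1 (p - 1),
      (k : ZMod (p ^ 2))⁻¹ + ((p - k : ℕ) : ZMod (p ^ 2))⁻¹
        = (p : ZMod (p ^ 2)) * (((k * (p - k) : ℕ)) : ZMod (p ^ 2))⁻¹ := by
    intro k hk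
    have hk2 := hk
    simp only [Finset.mem_Icc] at hk2
    have hk' : p - k ∈ Finset.Icc 1 (p - 1) := by
      simp only [Finset.mem_Icc]; omega
    have ha := unit_sq hp hk
    have hb := unit_sq hp hk'
    have hcast : (((k * (p - k) : ℕ)) : ZMod (p ^ 2))
        = (k : ZMod (p ^ 2)) * ((p - k : ℕ) : ZMod (p ^ 2)) := by push_cast; ring
    have hab : IsUnit (((k * (p - k) : ℕ)) : ZMod (p ^ 2)) := by
      rw [hcast]; exact ha.mul hb
    apply hab.mul_right_cancel
    have h1 : ((k : ZMod (p ^ 2))⁻¹ + ((p - k : ℕ) : ZMod (p ^ 2))⁻¹)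
        * (((k * (p - k) : ℕ)) : ZMod (p ^ 2)) = (p : ZMod (p ^ 2)) := by
      rw [hcast]
      calc ((k : ZMod (p ^ 2))⁻¹ + ((p - k : ℕ) : ZMod (p ^ 2))⁻¹)
            * ((k : ZMod (p ^ 2)) * ((p - k : ℕ) : ZMod (p ^ 2)))
          = (k : ZMod (p ^ 2))⁻¹ * (k : ZMod (p ^ 2)) * ((p - k : ℕ) : ZMod (p ^ 2))
            + ((p - k : ℕ) : ZMod (p ^ 2))⁻¹ * ((p - k : ℕ) : ZMod (p ^ 2))
              * (k : ZMod (p ^ 2)) := by ring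
        _ = ((p - k : ℕ) : ZMod (p ^ 2)) + (k : ZMod (p ^ 2)) := by
            rw [ZMod.inv_mul_of_unit _ ha, ZMod.inv_mul_of_unit _ hb, one_mul, one_mul]
        _ = ((p - k + k : ℕ) : ZMod (p ^ 2)) := by push_cast; ring
        _ = (p : ZMod (p ^ 2)) := by rw [Nat.sub_add_cancel (by omega)]
    rw [h1, mul_assoc, ZMod.inv_mul_of_unit _ hab, mul_one]
  have h2S : 2 * S = (p : ZMod (p ^ 2)) * T := by
    rw [two_mul]
    nth_rewrite 2 [hrev]
    rw [← Finset.sum_add_distrib, hT, Finset.mul_sum]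
    exact Finset.sum_congr rfl key
  -- cast T to ZMod p and show it vanishes
  let f : ZMod (p ^ 2) →+* ZMod p := ZMod.castHom (dvd_pow_self p two_ne_zero) (ZMod p)
  have hfT : f T = 0 := by
    rw [hT, map_sum]
    have hterm : ∀ k ∈ Finset.Icc 1 (p - 1),
        f ((((k * (p - k) : ℕ)) : ZMod (p ^ 2))⁻¹) = -(((k : ZMod p))⁻¹) ^ 2 := by
      intro k hk
      simp only [Finset.mem_Icc] at hk
      have hk' : p - k ∈ Finset.Icc 1 (p - 1) := by simp only [Finset.mem_Icc]; omega
      have hc : IsUnit (((k * (p - k) : ℕ)) : ZMod (p ^ 2)) := by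
        have : (((k * (p - k) : ℕ)) : ZMod (p ^ 2))
            = (k : ZMod (p ^ 2)) * ((p - k : ℕ) : ZMod (p ^ 2)) := by push_cast; ring
        rw [this]
        exact (unit_sq hp (by simp only [Finset.mem_Icc]; omega)).mul (unit_sq hp hk')
      have h1 : f ((((k * (p - k) : ℕ)) : ZMod (p ^ 2))⁻¹)
          * f (((k * (p - k) : ℕ)) : ZMod (p ^ 2)) = 1 := by
        rw [← map_mul, ZMod.inv_mul_of_unit _ hc, map_one]
      have h2 : f ((((k * (p - k) : ℕ)) : ZMod (p ^ 2))⁻¹)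
          = (f (((k * (p - k) : ℕ)) : ZMod (p ^ 2)))⁻¹ := eq_inv_of_mul_eq_one_left h1
      rw [h2, map_natCast]
      have h3 : (((k * (p - k) : ℕ)) : ZMod p) = -((k : ZMod p) ^ 2) := by
        have : ((p - k : ℕ) : ZMod p) = -(k : ZMod p) := by
          have : ((p - k + k : ℕ) : ZMod p) = 0 := by
            rw [Nat.sub_add_cancel (by omega), ZMod.natCast_self]
          push_cast at this
          linear_combination this
        rw [Nat.cast_mul, this]
        ring
      rw [h3, inv_neg, ← inv_pow]
    rw [Finset.sum_congr rfl hterm]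
    have := sum_icc_eq_sum_units (p := p) (fun z : ZMod p => -(z⁻¹) ^ 2)
    rw [this]
    simp only [ZMod.inv_coe_unit]
    have heq := Equiv.sum_comp (Equiv.inv (ZMod p)ˣ) (fun x : (ZMod p)ˣ => -((x : ZMod p)) ^ 2)
    simp only [Equiv.inv_apply] at heq
    rw [heq, Finset.sum_neg_distrib, neg_eq_zero]
    exact sum_units_sq h5
  -- hence p ∣ T.val and p * T = 0
  have hvalT : ((T.val : ℕ) : ZMod p) = 0 := by
    rw [ZMod.natCast_val, ← ZMod.castHom_apply (h := dvd_pow_self p two_ne_zero)]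
    exact hfT
  obtain ⟨m, hm⟩ := (ZMod.natCast_eq_zero_iff _ _).mp hvalT
  have hpT : (p : ZMod (p ^ 2)) * T = 0 := by
    conv_lhs => rw [← ZMod.natCast_zmod_val T, hm]
    have hps : ((p ^ 2 : ℕ) : ZMod (p ^ 2)) = 0 := ZMod.natCast_self _
    calc (p : ZMod (p ^ 2)) * ((p * m : ℕ) : ZMod (p ^ 2))
        = ((p ^ 2 : ℕ) : ZMod (p ^ 2)) * (m : ZMod (p ^ 2)) := by push_cast; ring
      _ = 0 := by rw [hps, zero_mul]
  have h2u : IsUnit (2 : ZMod (p ^ 2)) := by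
    have h2n : ((2 : ℕ) : ZMod (p ^ 2)) = 2 := by norm_num
    rw [← h2n, ZMod.isUnit_iff_coprime]
    exact ((Nat.coprime_primes Nat.prime_two hp).mpr (by omega)).pow_right 2
  apply h2u.mul_left_cancel
  rw [h2S, hpT, mul_zero]

end WolstenholmeAux

/-- For a prime `p ≥ 5`, the harmonic number `H_{p-1} = ∑_{k=1}^{p-1} 1/k`
vanishes modulo `p^2`: it is zero or has `p`-adic valuation at least `2`. -/
theorem harmonic_padicValRat_ge_two (p : ℕ) (hp : p.Prime) (h5 : 5 ≤ p) :
    (∑ k ∈ Finset.Icc 1 (p - 1), (1 : ℚ) / k) = 0 ∨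
      2 ≤ padicValRat p (∑ k ∈ Finset.Icc 1 (p - 1), (1 : ℚ) / k) := by
  haveI : Fact p.Prime := ⟨hp⟩
  right
  classical
  set N : ℕ := ∑ k ∈ Finset.Icc 1 (p - 1), (p - 1).factorial / k with hN
  have hdvdfac : ∀ k ∈ Finset.Icc 1 (p - 1), k ∣ (p - 1).factorial := by
    intro k hk; simp only [Finset.mem_Icc] at hk
    exact Nat.dvd_factorial (by omega) (by omega)
  have hNcast : ((N : ℕ) : ZMod (p ^ 2)) = 0 := by
    rw [hN, Nat.cast_sum]
    have hterm : ∀ k ∈ Finset.Icc 1 (p - 1),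
        (((p - 1).factorial / k : ℕ) : ZMod (p ^ 2))
          = (((p - 1).factorial : ℕ) : ZMod (p ^ 2)) * ((k : ZMod (p ^ 2)))⁻¹ := by
      intro k hk
      have hu := WolstenholmeAux.unit_sq hp hk
      have heq : (((p - 1).factorial / k : ℕ) : ZMod (p ^ 2)) * (k : ZMod (p ^ 2))
          = (((p - 1).factorial : ℕ) : ZMod (p ^ 2)) := by
        rw [← Nat.cast_mul, Nat.div_mul_cancel (hdvdfac k hk)]
      calc (((p - 1).factorial / k : ℕ) : ZMod (p ^ 2))
          = (((p - 1).factorial / k : ℕ) : ZMod (p ^ 2))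
            * ((k : ZMod (p ^ 2)) * ((k : ZMod (p ^ 2)))⁻¹) := by
              rw [ZMod.mul_inv_of_unit _ hu, mul_one]
        _ = ((((p - 1).factorial / k : ℕ) : ZMod (p ^ 2)) * (k : ZMod (p ^ 2)))
            * ((k : ZMod (p ^ 2)))⁻¹ := by ring
        _ = (((p - 1).factorial : ℕ) : ZMod (p ^ 2)) * ((k : ZMod (p ^ 2)))⁻¹ := by
              rw [heq]
    rw [Finset.sum_congr rfl hterm, ← Finset.mul_sum,
      WolstenholmeAux.sum_inv_zero h5, mul_zero]
  have hdvd : p ^ 2 ∣ N := (ZMod.natCast_eq_zero_iff _ _).mp hNcast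
  have hNpos : 0 < N := by
    have h1 : (1 : ℕ) ∈ Finset.Icc 1 (p - 1) := by
      simp only [Finset.mem_Icc]; omega
    calc 0 < (p - 1).factorial / 1 := by
          simpa using (p - 1).factorial_pos
      _ ≤ N := Finset.single_le_sum
          (f := fun k => (p - 1).factorial / k) (fun i _ => Nat.zero_le _) h1
  have hfacne : (((p - 1).factorial : ℕ) : ℚ) ≠ 0 :=
    Nat.cast_ne_zero.mpr (p - 1).factorial_pos.ne'
  have hH : (∑ k ∈ Finset.Icc 1 (p - 1), (1 : ℚ) / k)
      = (N : ℚ) / (((p - 1).factorial : ℕ) : ℚ) := by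
    rw [hN, Nat.cast_sum, Finset.sum_div]
    refine Finset.sum_congr rfl fun k hk => ?_
    have hk2 := hk
    simp only [Finset.mem_Icc] at hk2
    have hk0 : (k : ℚ) ≠ 0 := Nat.cast_ne_zero.mpr (by omega)
    rw [Nat.cast_div (hdvdfac k hk) hk0]
    field_simp
  rw [hH, padicValRat.div (Nat.cast_ne_zero.mpr hNpos.ne') hfacne]
  have h1 : padicValRat p (((p - 1).factorial : ℕ) : ℚ) = 0 := by
    rw [padicValRat.of_nat]
    have hnd : ¬ p ∣ (p - 1).factorial := by
      rw [hp.dvd_factorial]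
      omega
    rw [padicValNat.eq_zero_of_not_dvd hnd]
    norm_num
  have h2 : (2 : ℤ) ≤ padicValRat p ((N : ℕ) : ℚ) := by
    rw [padicValRat.of_nat]
    exact_mod_cast (padicValNat_dvd_iff_le hNpos.ne').mp hdvd
  omega
end

section
/- For any prime p ≥ 5, the generalized harmonic number H_{p-1}^{(2)} = ∑_{k=1}^{p-1} 1/k^2 (a rational number) satisfies H_{p-1}^{(2)} ≡ 0 (mod p) in the sense that either H_{p-1}^{(2)} = 0 or its p-adic valuation is at least 1: padicValRat p (H_{p-1}^{(2)}) ≥ 1. -/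
open Finset

lemma aux_sum_inv_sq (p : ℕ) (hp : p.Prime) (h5 : 5 ≤ p) :
    ∑ k ∈ Finset.Icc 1 (p - 1), ((k : ZMod p)⁻¹) ^ 2 = 0 := by
  haveI : Fact p.Prime := ⟨hp⟩
  have h0 : Finset.Icc 1 (p - 1) = Finset.Ico 1 p := by
    ext x; simp only [Finset.mem_Icc, Finset.mem_Ico]; omega
  have h1 : ∑ k ∈ Finset.range p, ((k : ZMod p)⁻¹) ^ 2
      = ∑ k ∈ Finset.Icc 1 (p - 1), ((k : ZMod p)⁻¹) ^ 2 := by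
    rw [h0, Finset.range_eq_Ico, Finset.sum_eq_sum_Ico_succ_bot hp.pos]
    simp
  have h2 : ∑ k ∈ Finset.range p, ((k : ZMod p)⁻¹) ^ 2
      = ∑ x : ZMod p, (x⁻¹) ^ 2 := by
    refine Finset.sum_nbij' (fun k => (k : ZMod p)) (fun x => x.val)
      (fun a _ => Finset.mem_univ _) (fun x _ => Finset.mem_range.mpr (ZMod.val_lt x))
      (fun a ha => ?_) (fun x _ => ZMod.natCast_zmod_val x) (fun a _ => rfl)
    exact ZMod.val_natCast_of_lt (Finset.mem_range.mp ha)
  have h3 : ∑ x : ZMod p, (x⁻¹) ^ 2 = ∑ x : ZMod p, x ^ 2 := by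
    exact Fintype.sum_bijective (fun x : ZMod p => x⁻¹)
      (Function.Involutive.bijective inv_involutive) _ _ (fun x => rfl)
  have h4 : ∑ x : ZMod p, x ^ 2 = 0 := by
    apply FiniteField.sum_pow_lt_card_sub_one
    rw [ZMod.card]; omega
  rw [← h1, h2, h3, h4]

/-- For a prime `p ≥ 5`, the generalized harmonic number
`H_{p-1}^{(2)} = ∑_{k=1}^{p-1} 1/k^2` vanishes modulo `p`:
it is zero or has `p`-adic valuation at least `1`. -/
theorem harmonic_sq_padicValRat_ge_one (p : ℕ) (hp : p.Prime) (h5 : 5 ≤ p) :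
    (∑ k ∈ Finset.Icc 1 (p - 1), (1 : ℚ) / (k : ℚ) ^ 2) = 0 ∨
      1 ≤ padicValRat p (∑ k ∈ Finset.Icc 1 (p - 1), (1 : ℚ) / (k : ℚ) ^ 2) := by
  haveI : Fact p.Prime := ⟨hp⟩
  set F : ℕ := (p - 1).factorial with hF
  set A : ℕ := ∑ k ∈ Finset.Icc 1 (p - 1), (F / k) ^ 2 with hA
  have hFpos : 0 < F := Nat.factorial_pos _
  have hdvd : ∀ k ∈ Finset.Icc 1 (p - 1), k ∣ F := by
    intro k hk
    rw [Finset.mem_Icc] at hk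
    exact Nat.dvd_factorial hk.1 hk.2
  have hkne : ∀ k ∈ Finset.Icc 1 (p - 1), (k : ℚ) ≠ 0 := by
    intro k hk
    rw [Finset.mem_Icc] at hk
    exact_mod_cast Nat.one_le_iff_ne_zero.mp hk.1
  -- the sum equals A / F^2
  have hS : (∑ k ∈ Finset.Icc 1 (p - 1), (1 : ℚ) / (k : ℚ) ^ 2)
      = (A : ℚ) / (F : ℚ) ^ 2 := by
    rw [hA, Nat.cast_sum, Finset.sum_div]
    refine Finset.sum_congr rfl fun k hk => ?_
    have hk0 := hkne k hk
    have hcast : ((F / k : ℕ) : ℚ) = (F : ℚ) / (k : ℚ) :=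
      Nat.cast_div (hdvd k hk) hk0
    push_cast [hcast]
    rw [div_pow]
    field_simp
  -- A is positive
  have hApos : 0 < A := by
    apply Finset.sum_pos
    · intro k hk
      have := Nat.div_pos (Nat.le_of_dvd hFpos (hdvd k hk))
        (by rw [Finset.mem_Icc] at hk; omega)
      positivity
    · refine ⟨1, Finset.mem_Icc.mpr ⟨le_refl _, ?_⟩⟩; omega
  -- p divides A
  have hpA : p ∣ A := by
    rw [← ZMod.natCast_eq_zero_iff]
    have : ((A : ℕ) : ZMod p) = ∑ k ∈ Finset.Icc 1 (p - 1),
        ((F : ZMod p))^2 * ((k : ZMod p)⁻¹) ^ 2 := by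
      rw [hA]
      push_cast
      refine Finset.sum_congr rfl fun k hk => ?_
      have hkz : (k : ZMod p) ≠ 0 := by
        rw [Ne, ZMod.natCast_eq_zero_iff]
        rw [Finset.mem_Icc] at hk
        intro hd
        have := Nat.le_of_dvd (by omega) hd
        omega
      have hmul : ((F / k : ℕ) : ZMod p) * (k : ZMod p) = (F : ZMod p) := by
        rw [← Nat.cast_mul, Nat.div_mul_cancel (hdvd k hk)]
      have : ((F / k : ℕ) : ZMod p) = (F : ZMod p) * (k : ZMod p)⁻¹ := by
        field_simp [hkz] at hmul ⊢
        exact hmul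
      rw [this, mul_pow]
    rw [this, ← Finset.mul_sum, aux_sum_inv_sq p hp h5, mul_zero]
  -- p does not divide F^2
  have hpF : ¬ p ∣ F ^ 2 := by
    intro h
    have h' : p ∣ F := hp.dvd_of_dvd_pow h
    rw [hF, Nat.Prime.dvd_factorial hp] at h'
    omega
  right
  rw [hS]
  have hFne : ((F : ℚ) ^ 2) ≠ 0 := by positivity
  have hAne : ((A : ℚ)) ≠ 0 := by exact_mod_cast hApos.ne'
  rw [padicValRat.div hAne hFne]
  have e1 : padicValRat p ((F : ℚ) ^ 2) = padicValNat p (F ^ 2) := by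
    rw [← Nat.cast_pow, padicValRat.of_nat]
  have e2 : padicValRat p (A : ℚ) = padicValNat p A := padicValRat.of_nat
  rw [e1, e2, padicValNat.eq_zero_of_not_dvd hpF]
  have := one_le_padicValNat_of_dvd hApos.ne' hpA
  omega
end

section
/- For any prime p ≥ 5, the double sum S = ∑_{1 ≤ i < j ≤ p-1} 1/(i·j) (a rational number) satisfies S ≡ 0 (mod p), in the sense that either S = 0 or padicValRat p (S) ≥ 1. -/
open Finset

private lemma sum_Icc_eq_sum_zmod (p : ℕ) [Fact p.Prime] {M : Type*} [AddCommMonoid M]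
    (F : ZMod p → M) (hF : F 0 = 0) :
    ∑ k ∈ Icc 1 (p - 1), F (k : ZMod p) = ∑ x : ZMod p, F x := by
  classical
  have hp : p.Prime := Fact.out
  have hp1 : 1 < p := hp.one_lt
  rw [← Finset.sum_erase Finset.univ hF]
  refine Finset.sum_nbij' (fun k => (k : ZMod p)) (fun x => x.val) ?_ ?_ ?_ ?_ ?_
  · intro k hk
    simp only [mem_Icc] at hk
    have hklt : k < p := by omega
    have : ((k : ZMod p)).val = k := ZMod.val_natCast_of_lt hklt
    simp only [Finset.mem_erase, Finset.mem_univ, and_true]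
    intro h
    rw [h] at this
    simp [ZMod.val_zero] at this
    omega
  · intro x hx
    simp only [Finset.mem_erase, Finset.mem_univ, and_true] at hx
    have h1 : x.val < p := ZMod.val_lt x
    have h2 : x.val ≠ 0 := fun h => hx (by rwa [← ZMod.val_eq_zero])
    simp only [mem_Icc]
    omega
  · intro k hk
    simp only [mem_Icc] at hk
    exact ZMod.val_natCast_of_lt (by omega)
  · intro x _
    simp [ZMod.natCast_val, ZMod.cast_id]
  · intro k _
    rfl

private lemma zmod_double_sum_zero (p : ℕ) (hp : p.Prime) (h5 : 5 ≤ p) :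
    ∑ j ∈ Icc 1 (p - 1), ∑ i ∈ Ico 1 j, ((i : ZMod p)⁻¹ * (j : ZMod p)⁻¹) = 0 := by
  haveI : Fact p.Prime := ⟨hp⟩
  classical
  have hcard : Fintype.card (ZMod p) = p := ZMod.card p
  have hinv : Function.Involutive (Inv.inv : ZMod p → ZMod p) := fun x => inv_inv x
  -- sum of inverses over all of ZMod p is 0
  have h1 : ∑ x : ZMod p, x⁻¹ = 0 := by
    have := Fintype.sum_bijective (Inv.inv : ZMod p → ZMod p) hinv.bijective
      (fun x => x⁻¹) (fun x => x) (fun x => rfl)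
    rw [this]
    have := FiniteField.sum_pow_lt_card_sub_one (ZMod p) 1 (by rw [hcard]; omega)
    simpa using this
  have h2 : ∑ x : ZMod p, x⁻¹ * x⁻¹ = 0 := by
    have := Fintype.sum_bijective (Inv.inv : ZMod p → ZMod p) hinv.bijective
      (fun x => x⁻¹ * x⁻¹) (fun x => x * x) (fun x => rfl)
    rw [this]
    have := FiniteField.sum_pow_lt_card_sub_one (ZMod p) 2 (by rw [hcard]; omega)
    calc ∑ x : ZMod p, x * x = ∑ x : ZMod p, x ^ 2 := by simp [sq]
    _ = 0 := this
  have hH : ∑ k ∈ Icc 1 (p - 1), (k : ZMod p)⁻¹ = 0 := by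
    rw [sum_Icc_eq_sum_zmod p (fun x => x⁻¹) (by simp)]; exact h1
  have hQ : ∑ k ∈ Icc 1 (p - 1), ((k : ZMod p)⁻¹ * (k : ZMod p)⁻¹) = 0 := by
    rw [sum_Icc_eq_sum_zmod p (fun x => x⁻¹ * x⁻¹) (by simp)]; exact h2
  set g : ℕ → ZMod p := fun k => (k : ZMod p)⁻¹ with hg
  set S := ∑ j ∈ Icc 1 (p - 1), ∑ i ∈ Ico 1 j, (g i * g j) with hSdef
  have hIcc : Icc 1 (p - 1) = Ico 1 p := by
    ext k; simp [mem_Icc, mem_Ico]; omega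
  have key : (0 : ZMod p) = S + S := by
    calc (0 : ZMod p) = (∑ k ∈ Icc 1 (p-1), g k) * (∑ k ∈ Icc 1 (p-1), g k) := by
          rw [hH, mul_zero]
    _ = ∑ i ∈ Ico 1 p, ∑ j ∈ Ico 1 p, g i * g j := by
          rw [Finset.sum_mul_sum, hIcc]
    _ = ∑ i ∈ Ico 1 p, (∑ j ∈ Ico 1 i, g i * g j + ∑ j ∈ Ico i p, g i * g j) := by
          apply Finset.sum_congr rfl
          intro i hi
          simp only [mem_Ico] at hi
          rw [Finset.sum_Ico_consecutive _ (by omega : 1 ≤ i) (by omega : i ≤ p)]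
    _ = ∑ i ∈ Ico 1 p, (∑ j ∈ Ico 1 i, g i * g j
          + (g i * g i + ∑ j ∈ Ico (i+1) p, g i * g j)) := by
          apply Finset.sum_congr rfl
          intro i hi
          simp only [mem_Ico] at hi
          rw [Finset.sum_eq_sum_Ico_succ_bot (by omega : i < p)]
    _ = (∑ i ∈ Ico 1 p, ∑ j ∈ Ico 1 i, g i * g j)
          + (∑ i ∈ Ico 1 p, g i * g i)
          + (∑ i ∈ Ico 1 p, ∑ j ∈ Ico (i+1) p, g i * g j) := by
          rw [Finset.sum_add_distrib, Finset.sum_add_distrib]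
          ring
    _ = S + 0 + S := by
          have e1 : (∑ i ∈ Ico 1 p, ∑ j ∈ Ico 1 i, g i * g j) = S := by
            rw [hSdef, hIcc]
            exact Finset.sum_congr rfl fun j _ => Finset.sum_congr rfl fun i _ => mul_comm _ _
          have e2 : (∑ i ∈ Ico 1 p, g i * g i) = 0 := by rw [← hIcc]; exact hQ
          have e3 : (∑ i ∈ Ico 1 p, ∑ j ∈ Ico (i+1) p, g i * g j) = S := by
            rw [Finset.sum_Ico_Ico_comm' 1 p (fun i j => g i * g j), hSdef, hIcc]
          rw [e1, e2, e3]
    _ = S + S := by rw [add_zero]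
  have h2ne : (2 : ZMod p) ≠ 0 := by
    have : ((2 : ℕ) : ZMod p) ≠ 0 := by
      rw [Ne, ZMod.natCast_eq_zero_iff]
      intro h
      have := Nat.le_of_dvd (by norm_num) h
      omega
    simpa using this
  have : (2 : ZMod p) * S = 0 := by rw [two_mul]; exact key.symm
  rcases mul_eq_zero.mp this with h | h
  · exact absurd h h2ne
  · exact h

/-- For a prime `p ≥ 5`, the double sum `S = ∑_{1 ≤ i < j ≤ p-1} 1/(i·j)`
vanishes modulo `p`: it is zero or has `p`-adic valuation at least `1`. -/
theorem double_sum_padicValRat_ge_one (p : ℕ) (hp : p.Prime) (h5 : 5 ≤ p) :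
    (∑ j ∈ Finset.Icc 1 (p - 1), ∑ i ∈ Finset.Ico 1 j, (1 : ℚ) / (i * j)) = 0 ∨
      1 ≤ padicValRat p
        (∑ j ∈ Finset.Icc 1 (p - 1), ∑ i ∈ Finset.Ico 1 j, (1 : ℚ) / (i * j)) := by
  haveI : Fact p.Prime := ⟨hp⟩
  classical
  set n := p - 1 with hn
  set W := n.factorial with hW
  have hWpos : 0 < W := Nat.factorial_pos n
  have hpW : ¬ p ∣ W := by
    intro h
    have := (Nat.Prime.dvd_factorial hp).mp h
    omega
  set c : ℕ → ℕ := fun k => W / k with hc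
  have hdvd : ∀ k, 1 ≤ k → k ≤ n → k ∣ W :=
    fun k h1 h2 => Nat.dvd_factorial (by omega) h2
  set N : ℕ := ∑ j ∈ Finset.Icc 1 n, ∑ i ∈ Finset.Ico 1 j, c i * c j with hN
  set S : ℚ := ∑ j ∈ Finset.Icc 1 n, ∑ i ∈ Finset.Ico 1 j, (1 : ℚ) / (i * j) with hSdef
  -- S = N / W^2
  have hceq : ∀ k, 1 ≤ k → k ≤ n → (c k : ℚ) = (W : ℚ) / k := by
    intro k h1 h2
    rw [eq_div_iff (by exact_mod_cast (by omega : k ≠ 0) : (k : ℚ) ≠ 0)]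
    exact_mod_cast congrArg (Nat.cast : ℕ → ℚ) (Nat.div_mul_cancel (hdvd k h1 h2))
  have hSN : S = (N : ℚ) / (W ^ 2 : ℚ) := by
    rw [hSdef, hN]
    push_cast
    rw [Finset.sum_div]
    apply Finset.sum_congr rfl
    intro j hj
    simp only [Finset.mem_Icc] at hj
    rw [Finset.sum_div]
    apply Finset.sum_congr rfl
    intro i hi
    simp only [Finset.mem_Ico] at hi
    have hi1 : 1 ≤ i := hi.1
    have hin : i ≤ n := by omega
    rw [hceq i hi1 hin, hceq j hj.1 hj.2]
    have hiQ : (i : ℚ) ≠ 0 := by exact_mod_cast (by omega : i ≠ 0)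
    have hjQ : (j : ℚ) ≠ 0 := by exact_mod_cast (by omega : j ≠ 0)
    have hWQ : (W : ℚ) ≠ 0 := by exact_mod_cast hWpos.ne'
    field_simp
  -- p ∣ N
  have hNmod : (N : ZMod p) = 0 := by
    rw [hN]
    push_cast
    have hterm : ∀ j ∈ Finset.Icc 1 n, ∀ i ∈ Finset.Ico 1 j,
        ((c i : ZMod p) * (c j : ZMod p))
          = ((W : ZMod p) * (W : ZMod p)) * ((i : ZMod p)⁻¹ * (j : ZMod p)⁻¹) := by
      intro j hj i hi
      simp only [Finset.mem_Icc] at hj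
      simp only [Finset.mem_Ico] at hi
      have key : ∀ k, 1 ≤ k → k ≤ n → (c k : ZMod p) = (W : ZMod p) * (k : ZMod p)⁻¹ := by
        intro k h1 h2
        have hkne : (k : ZMod p) ≠ 0 := by
          rw [Ne, ZMod.natCast_eq_zero_iff]
          intro h
          have := Nat.le_of_dvd (by omega) h
          omega
        rw [eq_mul_inv_iff_mul_eq₀ hkne]
        exact_mod_cast congrArg (Nat.cast : ℕ → ZMod p) (Nat.div_mul_cancel (hdvd k h1 h2))
      rw [key i hi.1 (by omega), key j hj.1 hj.2]
      ring
    rw [Finset.sum_congr rfl (fun j hj => Finset.sum_congr rfl (fun i hi => hterm j hj i hi))]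
    simp_rw [← Finset.mul_sum]
    rw [zmod_double_sum_zero p hp h5, mul_zero]
  have hpN : p ∣ N := (ZMod.natCast_eq_zero_iff N p).mp hNmod
  by_cases hS0 : S = 0
  · left; exact hS0
  · right
    have hNne : N ≠ 0 := by
      intro h
      apply hS0
      rw [hSN, h]; simp
    have hNQ : (N : ℚ) ≠ 0 := by exact_mod_cast hNne
    have hWQ : ((W ^ 2 : ℕ) : ℚ) ≠ 0 := by
      exact_mod_cast (pow_pos hWpos 2).ne'
    rw [hSN]
    have : ((W : ℚ) ^ 2) = ((W ^ 2 : ℕ) : ℚ) := by push_cast; ring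
    rw [this, padicValRat.div hNQ hWQ]
    rw [padicValRat.of_nat, padicValRat.of_nat]
    have h1 : 1 ≤ padicValNat p N :=
      one_le_padicValNat_of_dvd hNne hpN
    have h2 : padicValNat p (W ^ 2) = 0 := by
      apply padicValNat.eq_zero_of_not_dvd
      intro h
      exact hpW (hp.dvd_of_dvd_pow h)
    rw [h2]
    omega
end

section
/- Let p ≥ 5 be prime and let A ∈ ℚ[[X]] be the formal power series A = ∑_{n ≥ 0} X^n/(n+1)! (so that exp(X) - 1 = X·A, and A is a unit in ℚ[[X]] since its constant term is 1). Then the binomial coefficient binomial(2p-1, p-1) equals the coefficient of X^{p-1} in the formal power series exp(2pX) · A^{-p}, where exp(2pX) = ∑_{n ≥ 0} (2p)^n X^n / n! and A^{-p} denotes the p-th power of the inverse of the unit A. -/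
open PowerSeries

noncomputable def Aser : PowerSeries ℚ := PowerSeries.mk fun n => (1 : ℚ) / (Nat.factorial (n + 1) : ℚ)

lemma hA0 : constantCoeff Aser = 1 := by
  simp [Aser, ← coeff_zero_eq_constantCoeff]

lemma hAinv : Aser⁻¹ * Aser = 1 :=
  PowerSeries.inv_mul_cancel _ (by rw [hA0]; norm_num)

lemma hexpXA : exp ℚ = 1 + X * Aser := by
  ext n
  cases n with
  | zero => simp [coeff_exp, Aser]
  | succ n => simp [coeff_exp, Aser, Nat.factorial_succ]

lemma hexpAD : exp ℚ = Aser + X * (d⁄dX ℚ) Aser := by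
  ext n
  rw [coeff_exp]
  cases n with
  | zero => simp [Aser]
  | succ n =>
    rw [map_add, coeff_succ_X_mul, coeff_derivative]
    simp only [Aser, coeff_mk]
    rw [Nat.factorial_succ (n+1)]
    push_cast
    have h1 : ((n:ℚ) + 1 + 1) ≠ 0 := by positivity
    have h2 : ((n+1+1).factorial : ℚ) ≠ 0 := by exact_mod_cast (Nat.factorial_ne_zero _)
    field_simp
    ring

lemma key (n : ℕ) : coeff (n+1) ((Aser⁻¹)^(n+2) * exp ℚ) = 0 := by
  have hne : (-((n:ℚ)+1)) ≠ 0 := neg_ne_zero.mpr (by positivity)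
  have hsplit : (Aser⁻¹)^(n+2) * exp ℚ
      = (Aser⁻¹)^(n+1) + X * ((Aser⁻¹)^(n+2) * (d⁄dX ℚ) Aser) := by
    rw [hexpAD, mul_add]
    congr 1
    · rw [pow_succ, mul_assoc, hAinv, mul_one]
    · ring
  have hdC : (d⁄dX ℚ) ((Aser⁻¹)^(n+1)) = (-((n:ℚ)+1)) • ((Aser⁻¹)^(n+2) * (d⁄dX ℚ) Aser) := by
    rw [Derivation.leibniz_pow, derivative_inv']
    simp only [smul_eq_mul, nsmul_eq_mul, smul_eq_C_mul, map_neg, map_add, map_one, map_natCast, Nat.add_sub_cancel_left, Nat.add_sub_cancel, Nat.cast_add, Nat.cast_one]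
    ring
  have h2 : ((Aser⁻¹)^(n+2) * (d⁄dX ℚ) Aser) = (-((n:ℚ)+1))⁻¹ • (d⁄dX ℚ) ((Aser⁻¹)^(n+1)) := by
    rw [hdC, smul_smul, inv_mul_cancel₀ hne, one_smul]
  rw [hsplit, map_add, coeff_succ_X_mul, h2, map_smul, coeff_derivative, smul_eq_mul]
  have hne2 : (-1 - (n:ℚ)) ≠ 0 := by intro h; apply hne; linarith
  have e : (n:ℚ) * (-1-(n:ℚ))⁻¹ + (-1-(n:ℚ))⁻¹ = -1 := by field_simp; ring
  linear_combination ((coeff (n+1)) (Aser⁻¹ ^ (n+1))) * e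

lemma hexp2p (p : ℕ) :
    (PowerSeries.mk fun n => ((2 * p : ℚ)) ^ n / (Nat.factorial n : ℚ)) = exp ℚ ^ (2 * p) := by
  rw [exp_pow_eq_rescale_exp]
  ext n
  rw [coeff_mk, coeff_rescale, coeff_exp]
  push_cast
  field_simp

lemma hpowAk (p k : ℕ) (hk : k ≤ p) : Aser ^ k * (Aser⁻¹) ^ p = (Aser⁻¹) ^ (p - k) := by
  have h : p = k + (p - k) := by omega
  calc Aser ^ k * (Aser⁻¹) ^ p = Aser ^ k * ((Aser⁻¹) ^ k * (Aser⁻¹) ^ (p - k)) := by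
        rw [← pow_add, ← h]
    _ = (Aser⁻¹ * Aser) ^ k * (Aser⁻¹) ^ (p - k) := by rw [mul_pow]; ring
    _ = (Aser⁻¹) ^ (p - k) := by rw [hAinv, one_pow, one_mul]

/-- For a prime `p ≥ 5`, `binomial(2p-1, p-1)` is the coefficient of `X^{p-1}` in
`exp(2pX) · A⁻ᵖ`, where `A = ∑_{n≥0} Xⁿ/(n+1)!` (a unit of `ℚ[[X]]`, and `A⁻¹`
is its inverse). -/
theorem choose_eq_coeff_exp_mul_inv_pow (p : ℕ) (hp : p.Prime) (h5 : 5 ≤ p) :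
    ((Nat.choose (2 * p - 1) (p - 1) : ℚ)) =
      PowerSeries.coeff (p - 1)
        ((PowerSeries.mk fun n => ((2 * p : ℚ)) ^ n / (Nat.factorial n : ℚ)) *
          ((PowerSeries.mk fun n => (1 : ℚ) / (Nat.factorial (n + 1) : ℚ))⁻¹) ^ p) := by
  have hAdef : (PowerSeries.mk fun n => (1 : ℚ) / (Nat.factorial (n + 1) : ℚ)) = Aser := rfl
  rw [hAdef, hexp2p]
  have hsplit : exp ℚ ^ (2 * p) = (X * Aser + 1) ^ (2 * p - 1) * exp ℚ := by
    conv_lhs => rw [show 2 * p = (2 * p - 1) + 1 by omega]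
    rw [pow_succ, hexpXA]
    ring_nf
  rw [hsplit, add_pow, Finset.sum_mul, Finset.sum_mul, map_sum]
  have hterm : ∀ k ∈ Finset.range (2 * p - 1 + 1),
      coeff (p - 1) ((X * Aser) ^ k * (1:ℚ⟦X⟧) ^ (2 * p - 1 - k) * ((2*p-1).choose k : ℚ⟦X⟧)
          * exp ℚ * Aser⁻¹ ^ p)
        = ((2*p-1).choose k : ℚ) * coeff (p - 1) (X ^ k * (Aser ^ k * Aser⁻¹ ^ p * exp ℚ)) := by
    intro k _
    rw [one_pow, mul_one]
    have : (X * Aser) ^ k * (((2*p-1).choose k : ℚ⟦X⟧)) * exp ℚ * Aser⁻¹ ^ p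
        = (C ((2*p-1).choose k : ℚ)) * (X ^ k * (Aser ^ k * Aser⁻¹ ^ p * exp ℚ)) := by
      rw [mul_pow, map_natCast (C (R := ℚ))]
      ring
    rw [this, coeff_C_mul]
  rw [Finset.sum_congr rfl hterm]
  rw [Finset.sum_eq_single (p - 1)]
  · -- main term k = p-1
    rw [coeff_X_pow_mul', if_pos le_rfl, Nat.sub_self, hpowAk p (p-1) (by omega), show p - (p - 1) = 1 by omega, pow_one]
    rw [coeff_zero_eq_constantCoeff, map_mul, constantCoeff_inv, hA0, constantCoeff_exp]
    norm_num
  · intro k hk hne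
    rcases lt_or_gt_of_ne hne with hlt | hgt
    · -- k < p - 1
      rw [coeff_X_pow_mul' , if_pos (by omega), hpowAk p k (by omega)]
      obtain ⟨m, hm⟩ : ∃ m, p - k = m + 2 := ⟨p - k - 2, by omega⟩
      rw [hm, show p - 1 - k = m + 1 by omega, key m, mul_zero]
    · -- k > p - 1
      rw [coeff_X_pow_mul', if_neg (by omega), mul_zero]
  · intro h
    exact absurd (Finset.mem_range.mpr (by omega)) h
end

section
/- For any prime p ≥ 5, the rational number D = binomial(2p-1, p-1) − 1 − p·H_{p-1} − p^2·∑_{1 ≤ i < j ≤ p-1} 1/(i·j) satisfies: either D = 0 or padicValRat p (D) ≥ 3. (This is the expansion of binomial(2p-1, p-1) = ∏_{k=1}^{p-1}(1 + p/k) to second order in p, with remainder divisible by p^3.) -/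
open Finset

private lemma aux_sum_val {p : ℕ} [hp : Fact p.Prime] {ι : Type*} (s : Finset ι) (f : ι → ℚ)
    (h : ∀ i ∈ s, f i = 0 ∨ 3 ≤ padicValRat p (f i)) :
    (∑ i ∈ s, f i) = 0 ∨ 3 ≤ padicValRat p (∑ i ∈ s, f i) := by
  classical
  induction s using Finset.cons_induction with
  | empty => simp
  | cons a s ha ih =>
    rw [Finset.sum_cons]
    rcases h a (Finset.mem_cons_self a s) with h0 | hv
    · rw [h0, zero_add]
      exact ih fun i hi => h i (Finset.mem_cons.2 (Or.inr hi))
    rcases ih (fun i hi => h i (Finset.mem_cons.2 (Or.inr hi))) with h0 | hv'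
    · rw [h0, add_zero]; exact Or.inr hv
    by_cases hz : f a + ∑ i ∈ s, f i = 0
    · exact Or.inl hz
    · exact Or.inr ((le_min hv hv').trans (padicValRat.min_le_padicValRat_add hz))

private lemma prod_Icc_one_fact (n : ℕ) : ∏ k ∈ Finset.Icc 1 n, k = n.factorial := by
  rw [← Finset.Ico_add_one_right_eq_Icc]
  exact Finset.prod_Ico_id_eq_factorial n

private lemma prod_shift_fact (p : ℕ) (hp : 1 ≤ p) :
    (∏ k ∈ Finset.Icc 1 (p - 1), (k + p)) * p.factorial = (2 * p - 1).factorial := by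
  have h1 : ∏ k ∈ Finset.Icc 1 (p - 1), (k + p) = ∏ k ∈ Finset.Icc (1 + p) (p - 1 + p), k := by
    rw [← Finset.map_add_right_Icc, Finset.prod_map]
    rfl
  have h2 : Finset.Icc (1 + p) (p - 1 + p) = Finset.Ioc p (2 * p - 1) := by
    rw [show 1 + p = p + 1 by ring, show p - 1 + p = 2 * p - 1 by omega, Finset.Icc_add_one_left_eq_Ioc]
  have h3 : (∏ k ∈ Finset.Ioc 0 p, k) * ∏ k ∈ Finset.Ioc p (2 * p - 1), k
      = ∏ k ∈ Finset.Ioc 0 (2 * p - 1), k :=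
    Finset.prod_Ioc_consecutive _ (Nat.zero_le p) (by omega)
  have h4 : ∀ n : ℕ, ∏ k ∈ Finset.Ioc 0 n, k = n.factorial := by
    intro n
    rw [← Finset.Icc_add_one_left_eq_Ioc]
    exact prod_Icc_one_fact n
  rw [h1, h2, mul_comm, ← h4 p, h3, h4]

private lemma choose_eq_prod (p : ℕ) (hp : 1 ≤ p) :
    (Nat.choose (2 * p - 1) (p - 1) : ℚ) = ∏ k ∈ Finset.Icc 1 (p - 1), (1 + (p : ℚ) / k) := by
  have hch : Nat.choose (2 * p - 1) (p - 1) * (p - 1).factorial * p.factorial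
      = (2 * p - 1).factorial := by
    have h := Nat.choose_mul_factorial_mul_factorial (show p - 1 ≤ 2 * p - 1 by omega)
    rwa [show 2 * p - 1 - (p - 1) = p by omega] at h
  have hN : ∏ k ∈ Finset.Icc 1 (p - 1), (k + p)
      = Nat.choose (2 * p - 1) (p - 1) * (p - 1).factorial :=
    Nat.eq_of_mul_eq_mul_right p.factorial_pos
      (by rw [prod_shift_fact p hp, ← hch])
  have hk0 : ∀ k ∈ Finset.Icc 1 (p - 1), (k : ℚ) ≠ 0 := by
    intro k hk
    have h1 := (Finset.mem_Icc.1 hk).1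
    exact Nat.cast_ne_zero.2 (by omega)
  have hsplit : ∏ k ∈ Finset.Icc 1 (p - 1), (1 + (p : ℚ) / k)
      = (∏ k ∈ Finset.Icc 1 (p - 1), ((k : ℚ) + p)) / ∏ k ∈ Finset.Icc 1 (p - 1), (k : ℚ) := by
    rw [← Finset.prod_div_distrib]
    refine Finset.prod_congr rfl fun k hk => ?_
    have := hk0 k hk
    field_simp
  have hnum : ∏ k ∈ Finset.Icc 1 (p - 1), ((k : ℚ) + p)
      = ((∏ k ∈ Finset.Icc 1 (p - 1), (k + p) : ℕ) : ℚ) := by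
    push_cast
    rfl
  have hden : ∏ k ∈ Finset.Icc 1 (p - 1), (k : ℚ) = ((p - 1).factorial : ℚ) := by
    rw [← Nat.cast_prod, prod_Icc_one_fact]
  have hfne : ((p - 1).factorial : ℚ) ≠ 0 := Nat.cast_ne_zero.2 (Nat.factorial_pos (p - 1)).ne'
  rw [hsplit, hnum, hN, hden]
  push_cast
  field_simp

private lemma prod_one_add_expand (p : ℕ) :
    ∏ k ∈ Finset.Icc 1 (p - 1), (1 + (p : ℚ) / k)
      = ∑ j ∈ Finset.range (p - 1 + 1), ∑ t ∈ (Finset.Icc 1 (p - 1)).powersetCard j,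
          (p : ℚ) ^ j * ∏ k ∈ t, (1 : ℚ) / k := by
  have h0 : ∏ k ∈ Finset.Icc 1 (p - 1), (1 + (p : ℚ) / k)
      = ∏ k ∈ Finset.Icc 1 (p - 1), ((p : ℚ) / k + 1) :=
    Finset.prod_congr rfl fun k _ => add_comm _ _
  rw [h0, Finset.prod_add]
  simp only [Finset.prod_const_one, mul_one]
  rw [Finset.sum_powerset]
  have hcard : (Finset.Icc 1 (p - 1)).card = p - 1 := by simp
  rw [hcard]
  refine Finset.sum_congr rfl fun j _ => Finset.sum_congr rfl fun t ht => ?_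
  have htc : t.card = j := (Finset.mem_powersetCard.1 ht).2
  rw [← htc, ← Finset.prod_const, ← Finset.prod_mul_distrib]
  exact Finset.prod_congr rfl fun k _ => by rw [mul_one_div]

private lemma pair_sup_eq {a b : ℕ} (h : a < b) : ({a, b} : Finset ℕ).sup id = b := by
  rw [Finset.sup_insert, Finset.sup_singleton]
  simp only [id_eq]
  exact sup_eq_right.2 h.le

private lemma pair_erase_eq {a b : ℕ} (h : a < b) : ({a, b} : Finset ℕ).erase b = {a} := by
  rw [Finset.erase_insert_of_ne h.ne, Finset.erase_singleton]
  rfl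

private lemma sum_powersetCard_two (p : ℕ) :
    ∑ t ∈ (Finset.Icc 1 (p - 1)).powersetCard 2, ∏ k ∈ t, (1 : ℚ) / k
      = ∑ j ∈ Finset.Icc 1 (p - 1), ∑ i ∈ Finset.Ico 1 j, (1 : ℚ) / (i * j) := by
  rw [Finset.sum_sigma' (Finset.Icc 1 (p - 1)) (fun j => Finset.Ico 1 j)
      (fun j i => (1 : ℚ) / (i * j))]
  symm
  refine Finset.sum_nbij' (fun x => ({x.2, x.1} : Finset ℕ))
    (fun t => ⟨t.sup id, (t.erase (t.sup id)).sup id⟩) ?_ ?_ ?_ ?_ ?_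
  · intro x hx
    obtain ⟨h1, h2⟩ := Finset.mem_sigma.1 hx
    have hj := Finset.mem_Icc.1 h1
    have hi := Finset.mem_Ico.1 h2
    refine Finset.mem_powersetCard.2 ⟨?_, Finset.card_pair (by omega)⟩
    intro y hy
    rcases Finset.mem_insert.1 hy with rfl | hy
    · exact Finset.mem_Icc.2 ⟨by omega, by omega⟩
    · rw [Finset.mem_singleton.1 hy]; exact h1
  · intro t ht
    obtain ⟨hsub, hc⟩ := Finset.mem_powersetCard.1 ht
    obtain ⟨a, b, hab, rfl⟩ := Finset.card_eq_two.1 hc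
    have ha := Finset.mem_Icc.1 (hsub (Finset.mem_insert_self a {b}))
    have hb := Finset.mem_Icc.1 (hsub (Finset.mem_insert_of_mem (Finset.mem_singleton_self b)))
    rcases hab.lt_or_gt with h | h
    · rw [pair_sup_eq h, pair_erase_eq h, Finset.sup_singleton, id_eq]
      simp only [Finset.mem_sigma, Finset.mem_Icc, Finset.mem_Ico]
      omega
    · rw [Finset.pair_comm a b, pair_sup_eq h, pair_erase_eq h, Finset.sup_singleton, id_eq]
      simp only [Finset.mem_sigma, Finset.mem_Icc, Finset.mem_Ico]
      omega
  · intro x hx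
    obtain ⟨h1, h2⟩ := Finset.mem_sigma.1 hx
    have hlt : x.2 < x.1 := (Finset.mem_Ico.1 h2).2
    rw [pair_sup_eq hlt, pair_erase_eq hlt, Finset.sup_singleton, id_eq]
  · intro t ht
    obtain ⟨hsub, hc⟩ := Finset.mem_powersetCard.1 ht
    obtain ⟨a, b, hab, rfl⟩ := Finset.card_eq_two.1 hc
    dsimp only
    rcases hab.lt_or_gt with h | h
    · rw [pair_sup_eq h, pair_erase_eq h, Finset.sup_singleton, id_eq]
    · rw [Finset.pair_comm a b, pair_sup_eq h, pair_erase_eq h, Finset.sup_singleton, id_eq]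
  · intro x hx
    obtain ⟨h1, h2⟩ := Finset.mem_sigma.1 hx
    have hi := Finset.mem_Ico.1 h2
    rw [Finset.prod_pair (show (x.2 : ℕ) ≠ x.1 by omega)]
    rw [div_mul_div_comm, one_mul]

/-- For a prime `p ≥ 5`, the remainder
`D = C(2p-1, p-1) - 1 - p·H_{p-1} - p²·∑_{1 ≤ i < j ≤ p-1} 1/(ij)`
is zero or has `p`-adic valuation at least `3`. -/
theorem expansion_remainder_padicValRat_ge_three (p : ℕ) (hp : p.Prime) (h5 : 5 ≤ p) :
    ((Nat.choose (2 * p - 1) (p - 1) : ℚ) - 1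
        - p * (∑ k ∈ Finset.Icc 1 (p - 1), (1 : ℚ) / k)
        - (p : ℚ) ^ 2 *
            (∑ j ∈ Finset.Icc 1 (p - 1), ∑ i ∈ Finset.Ico 1 j, (1 : ℚ) / (i * j))) = 0 ∨
      3 ≤ padicValRat p
        ((Nat.choose (2 * p - 1) (p - 1) : ℚ) - 1
          - p * (∑ k ∈ Finset.Icc 1 (p - 1), (1 : ℚ) / k)
          - (p : ℚ) ^ 2 *
              (∑ j ∈ Finset.Icc 1 (p - 1), ∑ i ∈ Finset.Ico 1 j, (1 : ℚ) / (i * j))) := by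
  haveI : Fact p.Prime := ⟨hp⟩
  have hp1 : 1 ≤ p := by omega
  set A : ℕ → ℚ := fun j => ∑ t ∈ (Finset.Icc 1 (p - 1)).powersetCard j,
      (p : ℚ) ^ j * ∏ k ∈ t, (1 : ℚ) / k with hA
  have hexp : (Nat.choose (2 * p - 1) (p - 1) : ℚ) = ∑ j ∈ Finset.range (p - 1 + 1), A j :=
    (choose_eq_prod p hp1).trans (prod_one_add_expand p)
  have hsplit : ∑ j ∈ Finset.range (p - 1 + 1), A j
      = A 0 + A 1 + A 2 + ∑ j ∈ Finset.Ico 3 (p - 1 + 1), A j := by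
    rw [Finset.range_eq_Ico,
      ← Finset.sum_Ico_consecutive A (show 0 ≤ 3 by omega) (show 3 ≤ p - 1 + 1 by omega)]
    congr 1
    rw [← Finset.range_eq_Ico]
    simp [Finset.sum_range_succ, add_assoc]
  have hA0 : A 0 = 1 := by
    simp [hA, Finset.powersetCard_zero]
  have hA1 : A 1 = (p : ℚ) * ∑ k ∈ Finset.Icc 1 (p - 1), (1 : ℚ) / k := by
    rw [hA]
    simp only [Finset.powersetCard_one, Finset.sum_map, Function.Embedding.coeFn_mk,
      Finset.prod_singleton, pow_one]
    rw [Finset.mul_sum]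
  have hA2 : A 2 = (p : ℚ) ^ 2 *
      ∑ j ∈ Finset.Icc 1 (p - 1), ∑ i ∈ Finset.Ico 1 j, (1 : ℚ) / (i * j) := by
    rw [hA, ← sum_powersetCard_two p, Finset.mul_sum]
  have hkey : ((Nat.choose (2 * p - 1) (p - 1) : ℚ) - 1
        - p * (∑ k ∈ Finset.Icc 1 (p - 1), (1 : ℚ) / k)
        - (p : ℚ) ^ 2 *
            (∑ j ∈ Finset.Icc 1 (p - 1), ∑ i ∈ Finset.Ico 1 j, (1 : ℚ) / (i * j)))
      = ∑ j ∈ Finset.Ico 3 (p - 1 + 1), A j := by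
    rw [hexp, hsplit, hA0, hA1, hA2]
    ring
  rw [hkey]
  apply aux_sum_val
  intro j hj
  have h3j : 3 ≤ j := (Finset.mem_Ico.1 hj).1
  rw [hA]
  apply aux_sum_val
  intro t ht
  right
  obtain ⟨hsub, hcardt⟩ := Finset.mem_powersetCard.1 ht
  have hNpos : 0 < ∏ k ∈ t, k := by
    apply Finset.prod_pos
    intro k hk
    have := Finset.mem_Icc.1 (hsub hk)
    omega
  have hprod : ∏ k ∈ t, (1 : ℚ) / k = (((∏ k ∈ t, k : ℕ) : ℚ))⁻¹ := by
    rw [Nat.cast_prod, ← Finset.prod_inv_distrib]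
    exact Finset.prod_congr rfl fun k _ => one_div _
  have hndvd : ¬ p ∣ ∏ k ∈ t, k := by
    intro hdvd
    obtain ⟨k, hk, hpk⟩ := (Nat.Prime.prime hp).dvd_finset_prod_iff _ |>.1 hdvd
    have hk2 := Finset.mem_Icc.1 (hsub hk)
    have := Nat.le_of_dvd (by omega) hpk
    omega
  have hvalN : padicValRat p (((∏ k ∈ t, k : ℕ) : ℚ)) = 0 := by
    rw [padicValRat.of_nat]
    exact_mod_cast padicValNat.eq_zero_of_not_dvd hndvd
  have hpne : ((p : ℚ)) ^ j ≠ 0 := pow_ne_zero _ (Nat.cast_ne_zero.2 hp.pos.ne')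
  have hNne : ((((∏ k ∈ t, k : ℕ) : ℚ)))⁻¹ ≠ 0 := inv_ne_zero (Nat.cast_ne_zero.2 hNpos.ne')
  rw [hprod, padicValRat.mul hpne hNne, padicValRat.inv, hvalN, neg_zero, add_zero,
    padicValRat.pow (p : ℚ), padicValRat.self hp.one_lt]
  simp only [mul_one]
  exact_mod_cast h3j
end

section
/- For any prime p ≥ 5, Glaisher's refinement of Wolstenholme's theorem holds: binomial(2p-1, p-1) ≡ 1 − (2/3)·p^3·B_{p-3} (mod p^4), i.e. the rational number binomial(2p-1, p-1) − 1 + (2/3)·p^3·B_{p-3} is either 0 or has p-adic valuation padicValRat at least 4. -/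
open Finset
namespace Gl
variable {p : ℕ} [hp : Fact p.Prime]

lemma norm_nat_le_one (n : ℕ) : ‖(n : ℚ_[p])‖ ≤ 1 := by
  simpa using Padic.norm_int_le_one (p := p) (n : ℤ)

lemma norm_nat_eq_one {n : ℕ} (h : ¬ p ∣ n) : ‖(n : ℚ_[p])‖ = 1 := by
  refine le_antisymm (norm_nat_le_one n) ?_
  by_contra hlt
  push_neg at hlt
  have h2 : ‖((n : ℤ) : ℚ_[p])‖ < 1 := by simpa using hlt
  exact h (by exact_mod_cast (Padic.norm_intCast_lt_one_iff (k := (n:ℤ))).1 h2)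

lemma norm_int_dvd_le {z : ℤ} (h : (p:ℤ) ∣ z) : ‖(z : ℚ_[p])‖ ≤ (p:ℝ)⁻¹ := by
  obtain ⟨w, rfl⟩ := h
  push_cast
  rw [norm_mul, Padic.norm_p]
  calc (p:ℝ)⁻¹ * ‖((w:ℤ) : ℚ_[p])‖ ≤ (p:ℝ)⁻¹ * 1 := by
        have := Padic.norm_int_le_one (p := p) w
        have h0 : (0:ℝ) ≤ (p:ℝ)⁻¹ := by positivity
        exact mul_le_mul_of_nonneg_left this h0
    _ = (p:ℝ)⁻¹ := mul_one _

/-- "x ≡ y with error of norm ≤ c" -/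
def Aeq (c : ℝ) (x y : ℚ_[p]) : Prop := ‖x - y‖ ≤ c

lemma Aeq.of_eq {c : ℝ} (hc : 0 ≤ c) {x y : ℚ_[p]} (h : x = y) : Aeq c x y := by
  simp [Aeq, h, hc]

lemma Aeq.symm {c : ℝ} {x y : ℚ_[p]} (h : Aeq c x y) : Aeq c y x := by
  unfold Aeq at *; rwa [← norm_neg, neg_sub]

lemma Aeq.trans {c : ℝ} {x y z : ℚ_[p]} (h1 : Aeq c x y) (h2 : Aeq c y z) : Aeq c x z := by
  unfold Aeq at *
  calc ‖x - z‖ = ‖(x - y) + (y - z)‖ := by ring_nf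
    _ ≤ max ‖x - y‖ ‖y - z‖ := Padic.nonarchimedean _ _
    _ ≤ c := max_le h1 h2

lemma Aeq.add {c : ℝ} {x y x' y' : ℚ_[p]} (h1 : Aeq c x y) (h2 : Aeq c x' y') :
    Aeq c (x + x') (y + y') := by
  unfold Aeq at *
  calc ‖x + x' - (y + y')‖ = ‖(x - y) + (x' - y')‖ := by ring_nf
    _ ≤ max _ _ := Padic.nonarchimedean _ _
    _ ≤ c := max_le h1 h2

lemma Aeq.neg {c : ℝ} {x y : ℚ_[p]} (h1 : Aeq c x y) : Aeq c (-x) (-y) := by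
  unfold Aeq at *
  calc ‖-x - -y‖ = ‖-(x-y)‖ := by ring_nf
    _ = ‖x - y‖ := norm_neg _
    _ ≤ c := h1

lemma Aeq.sub {c : ℝ} {x y x' y' : ℚ_[p]} (h1 : Aeq c x y) (h2 : Aeq c x' y') :
    Aeq c (x - x') (y - y') := by
  simpa [sub_eq_add_neg] using h1.add h2.neg

lemma Aeq.mul_le {c : ℝ} {x y z : ℚ_[p]} (h1 : Aeq c x y) (hz : ‖z‖ ≤ 1) :
    Aeq c (x * z) (y * z) := by
  unfold Aeq at *
  have : x * z - y * z = (x - y) * z := by ring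
  rw [this, norm_mul]
  calc ‖x-y‖ * ‖z‖ ≤ c * 1 := by
        refine mul_le_mul h1 hz (norm_nonneg _) (le_trans (norm_nonneg _) h1)
    _ = c := mul_one _

lemma Aeq.smul {c : ℝ} {x y : ℚ_[p]} (z : ℚ_[p]) (h1 : Aeq c x y) :
    Aeq (‖z‖ * c) (z * x) (z * y) := by
  unfold Aeq at *
  have : z * x - z * y = z * (x - y) := by ring
  rw [this, norm_mul]
  exact mul_le_mul_of_nonneg_left h1 (norm_nonneg _)

lemma Aeq.weaken {c c' : ℝ} (hcc : c ≤ c') {x y : ℚ_[p]} (h : Aeq c x y) : Aeq c' x y :=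
  le_trans h hcc

lemma norm_sum_le_max {ι : Type*} (s : Finset ι) (f : ι → ℚ_[p]) {C : ℝ} (hC : 0 ≤ C)
    (h : ∀ i ∈ s, ‖f i‖ ≤ C) : ‖∑ i ∈ s, f i‖ ≤ C := by
  classical
  induction s using Finset.induction with
  | empty => simpa using hC
  | insert a s' hx ih =>
    rw [Finset.sum_insert hx]
    refine le_trans (Padic.nonarchimedean _ _) (max_le (h _ (mem_insert_self _ _)) ?_)
    exact ih (fun i hi => h i (mem_insert_of_mem hi))

lemma Aeq.sum {ι : Type*} (s : Finset ι) (f g : ι → ℚ_[p]) {C : ℝ} (hC : 0 ≤ C)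
    (h : ∀ i ∈ s, Aeq C (f i) (g i)) : Aeq C (∑ i ∈ s, f i) (∑ i ∈ s, g i) := by
  unfold Aeq
  rw [← Finset.sum_sub_distrib]
  exact norm_sum_le_max s _ hC h

lemma norm_nat_eq (m : ℕ) (hm : m ≠ 0) :
    ‖(m : ℚ_[p])‖ = (p:ℝ) ^ (-(padicValNat p m : ℤ)) := by
  have hfac : (m.factorization p) = padicValNat p m := Nat.factorization_def m hp.out
  conv_lhs => rw [← Nat.ordProj_mul_ordCompl_eq_self m p]
  rw [Nat.cast_mul, Nat.cast_pow, norm_mul, norm_pow, Padic.norm_p,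
    norm_nat_eq_one (hfac ▸ Nat.not_dvd_ordCompl hp.out hm), mul_one, hfac,
    inv_pow, ← zpow_natCast (p:ℝ), ← zpow_neg]

lemma five_pow_ge (a : ℕ) : 4 * a + 1 ≤ 5 ^ a := by
  induction a with
  | zero => simp
  | succ n ih => have : 5^(n+1) = 5 * 5^n := by ring
                 omega

lemma val_small (h5 : 5 ≤ p) (m : ℕ) (hm : m ≠ 0) :
    padicValNat p m = 0 ∨ padicValNat p m + 4 ≤ m := by
  set a := padicValNat p m with ha
  rcases Nat.eq_zero_or_pos a with h | h
  · exact Or.inl h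
  · right
    have h1 : p ^ a ∣ m := pow_padicValNat_dvd
    have h2 : p ^ a ≤ m := Nat.le_of_dvd (Nat.pos_of_ne_zero hm) h1
    have h3 : 5 ^ a ≤ p ^ a := Nat.pow_le_pow_left h5 a
    have h4 := five_pow_ge a
    omega

/-- The summand in the rearranged Faulhaber formula. -/
noncomputable def tm (p n i : ℕ) : ℚ :=
  bernoulli i * (n.choose i) * (p:ℚ)^(n+1-i) / ((n:ℚ)+1-i)

lemma faulhaber' (n : ℕ) :
    (∑ k ∈ range p, (k:ℚ)^n) = ∑ i ∈ range (n+1), tm p n i := by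
  rw [_root_.sum_range_pow]
  refine Finset.sum_congr rfl fun i hi => ?_
  have hi' : i ≤ n := Nat.lt_succ_iff.mp (mem_range.mp hi)
  have h1 : (n+1) * n.choose i = (n+1).choose (i+1) * (i+1) := Nat.add_one_mul_choose_eq n i
  have h2 : (n+1).choose (i+1) * (i+1) = (n+1).choose i * (n+1-i) := Nat.choose_succ_right_eq (n+1) i
  have key : (n+1-i) * (n+1).choose i = (n+1) * n.choose i := by
    rw [mul_comm, ← h2, ← h1]
  have keyQ : ((n:ℚ)+1-i) * ((n+1).choose i) = ((n:ℚ)+1) * (n.choose i) := by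
    have := congrArg (Nat.cast : ℕ → ℚ) key
    push_cast [Nat.cast_sub (by omega : i ≤ n+1)] at this
    convert this using 2 <;> push_cast <;> ring
  have hn1 : ((n:ℚ)+1) ≠ 0 := by positivity
  have hm : ((n:ℚ)+1-i) ≠ 0 := by
    have : (i:ℚ) ≤ n := by exact_mod_cast hi'
    intro h; nlinarith
  unfold tm
  rw [div_eq_div_iff hn1 hm]
  linear_combination (bernoulli i * (p:ℚ)^(n+1-i)) * keyQ

lemma term_bound (h5 : 5 ≤ p) {n i j : ℕ} (hj : j ≤ 3) (hm : j + 1 ≤ n + 1 - i)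
    (hin : i ≤ n) (hB : ‖((bernoulli i : ℚ) : ℚ_[p])‖ ≤ p) :
    ‖((tm p n i : ℚ) : ℚ_[p])‖ ≤ (p:ℝ)^(-(j:ℤ)) := by
  set m := n + 1 - i with hmdef
  have hm0 : m ≠ 0 := by omega
  have hP1 : (1:ℝ) < p := by exact_mod_cast (by omega : 1 < p)
  have hP0 : (0:ℝ) < p := by linarith
  have e1 : ((m : ℕ):ℚ_[p]) = 1 + (n:ℚ_[p]) - (i:ℚ_[p]) := by
    rw [hmdef, Nat.cast_sub (by omega)]; push_cast; ring
  have hcast : ((tm p n i : ℚ) : ℚ_[p]) =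
      ((bernoulli i : ℚ) : ℚ_[p]) * ((n.choose i : ℕ) : ℚ_[p]) * ((p:ℚ_[p]))^m / ((m:ℕ) : ℚ_[p]) := by
    unfold tm
    push_cast
    rw [e1, show n + 1 - i = m from rfl]
    ring
  rw [hcast, norm_div, norm_mul, norm_mul, norm_pow, Padic.norm_p, norm_nat_eq m hm0]
  set a := padicValNat p m with hadef
  have hbound : (a:ℤ) + j + 1 ≤ m := by
    rcases val_small h5 m hm0 with h | h
    · omega
    · omega
  calc ‖((bernoulli i : ℚ) : ℚ_[p])‖ * ‖((n.choose i : ℕ) : ℚ_[p])‖ * (p:ℝ)⁻¹ ^ m / (p:ℝ) ^ (-(a:ℤ))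
      ≤ (p:ℝ) * 1 * (p:ℝ)⁻¹ ^ m / (p:ℝ) ^ (-(a:ℤ)) := by
        gcongr
        exact norm_nat_le_one _
    _ = (p:ℝ) * 1 * (p:ℝ)^(-(m:ℤ)) / (p:ℝ)^(-(a:ℤ)) := by
        rw [inv_pow, ← zpow_natCast (p:ℝ) m, ← zpow_neg]
    _ = (p:ℝ) ^ ((1:ℤ) - m + a) := by
        have hne : (p:ℝ) ≠ 0 := ne_of_gt hP0
        rw [mul_one, show (1:ℤ) - m + a = 1 + (-(m:ℤ)) - (-(a:ℤ)) by ring,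
          zpow_sub₀ hne, zpow_add₀ hne, zpow_one]
    _ ≤ (p:ℝ) ^ (-(j:ℤ)) := by
        apply zpow_le_zpow_right₀ (le_of_lt hP1)
        omega


lemma norm_sub_le_max (x y : ℚ_[p]) : ‖x - y‖ ≤ max ‖x‖ ‖y‖ := by
  have := Padic.nonarchimedean x (-y)
  simpa [sub_eq_add_neg] using this

lemma tm_top (n : ℕ) : tm p n n = bernoulli n * p := by
  unfold tm
  rw [Nat.choose_self, show n+1-n = 1 from by omega]
  have : (n:ℚ)+1-n = 1 := by ring
  rw [this]
  push_cast; ring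

lemma norm_bernoulli_odd_le_one (h5 : 5 ≤ p) {n : ℕ} (hodd : Odd n) :
    ‖((bernoulli n : ℚ) : ℚ_[p])‖ ≤ 1 := by
  rcases eq_or_ne n 1 with rfl | hne
  · rw [bernoulli_one]
    push_cast
    rw [norm_div, norm_neg, norm_one]
    have h2 : ‖((2:ℕ) : ℚ_[p])‖ = 1 := norm_nat_eq_one (fun h => by
      have := Nat.le_of_dvd (by norm_num) h; omega)
    push_cast at h2
    rw [h2]
    norm_num
  · have : bernoulli n = 0 := by
      rw [bernoulli_eq_bernoulli'_of_ne_one hne]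
      exact bernoulli'_eq_zero_of_odd hodd (by
        rcases hodd with ⟨k, hk⟩
        omega)
    simp [this]

lemma vsw (h5 : 5 ≤ p) (n : ℕ) : ‖((bernoulli n : ℚ) : ℚ_[p])‖ ≤ p := by
  induction n using Nat.strong_induction_on with
  | _ n ih =>
    have hp1 : (1:ℝ) ≤ p := by exact_mod_cast (by omega : 1 ≤ p)
    rcases Nat.eq_zero_or_pos n with rfl | hn
    · rw [bernoulli_zero]
      simpa using hp1
    · have hf := faulhaber' (p:=p) n
      rw [Finset.sum_range_succ, tm_top] at hf
      have hkey : (bernoulli n * p : ℚ) = (∑ k ∈ range p, (k:ℚ)^n) - ∑ i ∈ range n, tm p n i := by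
        rw [hf]; ring
      have h1 : ‖((bernoulli n * (p:ℚ) : ℚ) : ℚ_[p])‖ ≤ 1 := by
        rw [hkey]
        push_cast
        refine le_trans (norm_sub_le_max _ _) (max_le ?_ ?_)
        · exact norm_sum_le_max _ _ zero_le_one fun k _ => by
            rw [norm_pow]
            exact pow_le_one₀ (norm_nonneg _) (norm_nat_le_one k)
        · refine norm_sum_le_max _ _ zero_le_one fun i hi => ?_
          have hi' : i < n := mem_range.mp hi
          have := term_bound h5 (j := 0) (n := n) (i := i) (by omega) (by omega) (by omega)
            (ih i hi')
          simpa using this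
      have h2 : ‖((bernoulli n : ℚ) : ℚ_[p])‖ * (p:ℝ)⁻¹ ≤ 1 := by
        rw [Rat.cast_mul] at h1
        rw [norm_mul] at h1
        simpa [Padic.norm_p] using h1
      have hP0 : (0:ℝ) < p := by linarith
      calc ‖((bernoulli n : ℚ) : ℚ_[p])‖
          = ‖((bernoulli n : ℚ) : ℚ_[p])‖ * (p:ℝ)⁻¹ * p := by
            field_simp
        _ ≤ 1 * p := by
            have := mul_le_mul_of_nonneg_right h2 (le_of_lt hP0)
            simpa using this
        _ = p := one_mul _

lemma SB2 (h5 : 5 ≤ p) {n : ℕ} (hev : Even n) (hn2 : 2 ≤ n) :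
    ‖((∑ k ∈ range p, (k:ℚ)^n : ℚ) : ℚ_[p]) - (p:ℚ_[p]) * ((bernoulli n : ℚ) : ℚ_[p])‖
      ≤ (p:ℝ)^(-(2:ℤ)) := by
  obtain ⟨d, rfl⟩ : ∃ d, n = d + 2 := ⟨n - 2, by omega⟩
  have hf := faulhaber' (p:=p) (d+2)
  rw [show d+2+1 = (d+1)+1+1 from rfl, Finset.sum_range_succ, Finset.sum_range_succ,
    show (d+1)+1 = d+2 from rfl, tm_top] at hf
  have hmid : ‖((tm p (d+2) (d+1) : ℚ) : ℚ_[p])‖ ≤ (p:ℝ)^(-(2:ℤ)) := by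
    rcases Nat.eq_zero_or_pos d with rfl | hd
    · have : tm p 2 1 = -(p:ℚ)^2/2 := by
        unfold tm
        rw [bernoulli_one]
        norm_num
      rw [this]
      push_cast
      rw [norm_div, norm_neg, norm_pow, Padic.norm_p]
      have h2 : ‖((2:ℕ) : ℚ_[p])‖ = 1 := norm_nat_eq_one (fun h => by
        have := Nat.le_of_dvd (by norm_num) h; omega)
      push_cast at h2
      rw [h2]
      rw [div_one, inv_pow, ← zpow_natCast (p:ℝ) 2, ← zpow_neg]
      norm_num
    · have hodd : Odd (d+1) := by
        rcases hev with ⟨k, hk⟩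
        exact ⟨k - 1, by omega⟩
      have hd1 : d + 1 ≥ 3 := by
        rcases hev with ⟨k, hk⟩
        omega
      have : bernoulli (d+1) = 0 := by
        rw [bernoulli_eq_bernoulli'_of_ne_one (by omega)]
        exact bernoulli'_eq_zero_of_odd hodd (by omega)
      unfold tm
      rw [this]
      norm_num
  have hkey : ((∑ k ∈ range p, (k:ℚ)^(d+2)) - bernoulli (d+2) * p : ℚ)
      = (∑ i ∈ range (d+1), tm p (d+2) i) + tm p (d+2) (d+1) := by
    rw [hf]; ring
  have hcast : ((∑ k ∈ range p, (k:ℚ)^(d+2) : ℚ) : ℚ_[p]) - (p:ℚ_[p]) * ((bernoulli (d+2) : ℚ) : ℚ_[p])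
      = (((∑ k ∈ range p, (k:ℚ)^(d+2)) - bernoulli (d+2) * p : ℚ) : ℚ_[p]) := by
    push_cast; ring
  rw [hcast, hkey]
  push_cast
  refine le_trans (Padic.nonarchimedean _ _) (max_le ?_ hmid)
  refine norm_sum_le_max _ _ (by positivity) fun i hi => ?_
  have hi' : i < d + 1 := mem_range.mp hi
  exact term_bound h5 (j := 2) (by omega) (by omega) (by omega) (vsw h5 i)

lemma SB1 (h5 : 5 ≤ p) {n : ℕ} (hodd : Odd n) (hn1 : 1 ≤ n) :
    ‖((∑ k ∈ range p, (k:ℚ)^n : ℚ) : ℚ_[p])‖ ≤ (p:ℝ)^(-(1:ℤ)) := by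
  have hf := faulhaber' (p:=p) n
  rw [Finset.sum_range_succ, tm_top] at hf
  rw [hf]
  push_cast
  refine le_trans (Padic.nonarchimedean _ _) (max_le ?_ ?_)
  · refine norm_sum_le_max _ _ (by positivity) fun i hi => ?_
    have hi' : i < n := mem_range.mp hi
    exact term_bound h5 (j := 1) (by omega) (by omega) (by omega) (vsw h5 i)
  · rw [norm_mul, Padic.norm_p]
    calc ‖((bernoulli n : ℚ) : ℚ_[p])‖ * (p:ℝ)⁻¹ ≤ 1 * (p:ℝ)⁻¹ := by
          have h0 : (0:ℝ) ≤ (p:ℝ)⁻¹ := by positivity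
          exact mul_le_mul_of_nonneg_right (norm_bernoulli_odd_le_one h5 hodd) h0
      _ = (p:ℝ)^(-(1:ℤ)) := by rw [one_mul, zpow_neg, zpow_one]

lemma norm_mul_le_one_mul {c : ℝ} (x y : ℚ_[p]) (hx : ‖x‖ ≤ 1) (hy : ‖y‖ ≤ c) :
    ‖x * y‖ ≤ c := by
  rw [norm_mul]
  calc ‖x‖ * ‖y‖ ≤ 1 * c :=
        mul_le_mul hx hy (norm_nonneg _) zero_le_one
    _ = c := one_mul _

lemma norm_int_eq_one {z : ℤ} (h : ¬ (p:ℤ) ∣ z) : ‖(z : ℚ_[p])‖ = 1 := by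
  refine le_antisymm (Padic.norm_int_le_one z) ?_
  by_contra hlt
  push_neg at hlt
  exact h ((Padic.norm_intCast_lt_one_iff (k := z)).1 hlt)

lemma fermat_dvd {k : ℕ} (hk : ¬ p ∣ k) : (p:ℤ) ∣ (k:ℤ)^(p-1) - 1 := by
  have h1 : ((k:ℤ) : ZMod p) ≠ 0 := by
    rw [Int.cast_natCast]
    simpa [ZMod.natCast_eq_zero_iff] using hk
  have h2 : (((k:ℤ)^(p-1) - 1 : ℤ) : ZMod p) = 0 := by
    push_cast
    rw [ZMod.pow_card_sub_one_eq_one (by simpa using h1)]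
    ring
  exact (ZMod.intCast_zmod_eq_zero_iff_dvd _ p).1 h2

lemma norm_fermat {k : ℕ} (hk : ¬ p ∣ k) : ‖(k:ℚ_[p])^(p-1) - 1‖ ≤ (p:ℝ)⁻¹ := by
  have : (k:ℚ_[p])^(p-1) - 1 = (((k:ℤ)^(p-1) - 1 : ℤ) : ℚ_[p]) := by push_cast; ring
  rw [this]
  exact norm_int_dvd_le (fermat_dvd hk)

lemma not_dvd_of_mem_Ico {k : ℕ} (hk : k ∈ Ico 1 p) : ¬ p ∣ k := by
  rw [mem_Ico] at hk
  intro h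
  have := Nat.le_of_dvd (by omega) h
  omega

lemma binom_aux (n : ℕ) (x y : ℤ) :
    ∃ c : ℤ, (x - y)^n = x^n - n * x^(n-1) * y + y^2 * c := by
  induction n with
  | zero => exact ⟨0, by norm_num⟩
  | succ m ih =>
    obtain ⟨c, hc⟩ := ih
    rcases Nat.eq_zero_or_pos m with rfl | hm
    · exact ⟨0, by norm_num⟩
    · refine ⟨x*c + m*x^(m-1) - y*c, ?_⟩
      have hx : x^(m-1) * x = x^m := by
        rw [← pow_succ]
        congr 1
        omega
      have hstep : (x-y)^(m+1) = (x-y)^m * (x-y) := by ring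
      rw [hstep, hc, show m+1-1 = m from rfl]
      push_cast
      linear_combination (-(m:ℤ) * y) * hx

/-- The sum over `[1, p-1]` is invariant under `k ↦ k*b % p` for `b` coprime to `p`. -/
lemma sum_mul_mod (b : ℕ) (hb : ¬ p ∣ b) (f : ℕ → ℚ_[p]) :
    ∑ k ∈ Ico 1 p, f (k * b % p) = ∑ k ∈ Ico 1 p, f k := by
  have hp0 : 0 < p := hp.out.pos
  have hinj : ∀ x ∈ Ico 1 p, ∀ y ∈ Ico 1 p, x * b % p = y * b % p → x = y := by
    intro x hx y hy hxy
    rw [mem_Ico] at hx hy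
    have hzx : ((x * b % p : ℕ) : ZMod p) = ((y * b % p : ℕ) : ZMod p) := by rw [hxy]
    rw [ZMod.natCast_mod, ZMod.natCast_mod] at hzx
    push_cast at hzx
    have hbz : (b : ZMod p) ≠ 0 := by
      simpa [ZMod.natCast_eq_zero_iff] using hb
    have hxyz : (x : ZMod p) = (y : ZMod p) := by
      exact mul_right_cancel₀ hbz hzx
    have := congrArg ZMod.val hxyz
    rwa [ZMod.val_cast_of_lt (by omega), ZMod.val_cast_of_lt (by omega)] at this
  have hmaps : ∀ k ∈ Ico 1 p, k * b % p ∈ Ico 1 p := by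
    intro k hk
    rw [mem_Ico] at hk ⊢
    have h1 : k * b % p < p := Nat.mod_lt _ hp0
    have h2 : k * b % p ≠ 0 := by
      intro h
      have hdvd : p ∣ k * b := Nat.dvd_iff_mod_eq_zero.mpr h
      rcases (Nat.Prime.dvd_mul hp.out).1 hdvd with h' | h'
      · exact not_dvd_of_mem_Ico (by rw [mem_Ico]; omega) h'
      · exact hb h'
    omega
  have himg : (Ico 1 p).image (fun k => k * b % p) = Ico 1 p := by
    apply Finset.eq_of_subset_of_card_le
    · intro x hx
      rw [Finset.mem_image] at hx
      obtain ⟨k, hk, rfl⟩ := hx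
      exact hmaps k hk
    · rw [Finset.card_image_of_injOn (fun x hx y hy => hinj x hx y hy)]
  conv_rhs => rw [← himg]
  rw [Finset.sum_image hinj]

/-- `‖b^n - 1‖ ≤ 1` for natural `b`. -/
lemma norm_pow_sub_one_le (b n : ℕ) : ‖(b:ℚ_[p])^n - 1‖ ≤ 1 := by
  refine le_trans (norm_sub_le_max _ _) (max_le ?_ (by norm_num))
  rw [norm_pow]
  exact pow_le_one₀ (norm_nonneg _) (norm_nat_le_one b)

/-- Voronoi-type congruence mod p². -/
lemma voronoi (h5 : 5 ≤ p) (b : ℕ) (hb : ¬ p ∣ b) {n : ℕ} (hev : Even n) (hn2 : 2 ≤ n) :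
    ‖((b:ℚ_[p])^n - 1) * ((p:ℚ_[p]) * ((bernoulli n : ℚ) : ℚ_[p]))
      - (n:ℚ_[p]) * (p:ℚ_[p]) * (b:ℚ_[p])^(n-1)
        * (∑ k ∈ Ico 1 p, (k:ℚ_[p])^(n-1) * ((k * b / p : ℕ) : ℚ_[p]))‖
      ≤ (p:ℝ)^(-(2:ℤ)) := by
  have hp0 : 0 < p := hp.out.pos
  have hc2 : (0:ℝ) ≤ (p:ℝ)^(-(2:ℤ)) := by positivity
  set Sn : ℚ_[p] := ((∑ k ∈ range p, (k:ℚ)^n : ℚ) : ℚ_[p]) with hSn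
  set Qn : ℚ_[p] := ∑ k ∈ Ico 1 p, (k:ℚ_[p])^(n-1) * ((k * b / p : ℕ) : ℚ_[p]) with hQn
  have hSI : Sn = ∑ k ∈ Ico 1 p, (k:ℚ_[p])^n := by
    rw [hSn]
    push_cast
    rw [Finset.range_eq_Ico, Finset.sum_eq_sum_sdiff_singleton_add
      (Finset.mem_Ico.2 (by omega : 0 ≤ 0 ∧ 0 < p)) (fun k => (k:ℚ_[p])^n)]
    have hzt : ((0:ℕ):ℚ_[p])^n = 0 := by
      rw [Nat.cast_zero]
      exact zero_pow (by omega)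
    rw [hzt, add_zero]
    congr 1
    ext x
    simp only [Finset.mem_sdiff, Finset.mem_Ico, Finset.mem_singleton]
    omega
  have key : Aeq ((p:ℝ)^(-(2:ℤ)))
      (∑ k ∈ Ico 1 p, ((k * b % p : ℕ) : ℚ_[p])^n)
      (∑ k ∈ Ico 1 p, ((k:ℚ_[p])^n * (b:ℚ_[p])^n
        - (n:ℚ_[p]) * (b:ℚ_[p])^(n-1) * (p:ℚ_[p]) * ((k:ℚ_[p])^(n-1) * ((k * b / p : ℕ) : ℚ_[p])))) := by
    refine Aeq.sum _ _ _ hc2 fun k hk => ?_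
    obtain ⟨c, hc⟩ := binom_aux n ((k*b : ℕ) : ℤ) ((p * (k*b/p) : ℕ) : ℤ)
    have hxy : ((k*b : ℕ) : ℤ) - ((p * (k*b/p) : ℕ) : ℤ) = ((k*b%p : ℕ) : ℤ) := by
      have h0 := Int.mul_ediv_add_emod ((k:ℤ)*b) (p:ℤ)
      push_cast
      linarith
    rw [hxy] at hc
    have hcK := congrArg (fun z : ℤ => (z : ℚ_[p])) hc
    simp only [Int.cast_sub, Int.cast_add, Int.cast_mul, Int.cast_pow,
      Int.cast_natCast, Int.cast_one] at hcK
    push_cast at hcK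
    unfold Aeq
    have hdiff : ((k * b % p : ℕ) : ℚ_[p])^n - ((k:ℚ_[p])^n * (b:ℚ_[p])^n
        - (n:ℚ_[p]) * (b:ℚ_[p])^(n-1) * (p:ℚ_[p]) * ((k:ℚ_[p])^(n-1) * ((k*b/p : ℕ) : ℚ_[p])))
        = (p:ℚ_[p])^2 * (((k*b/p : ℕ) : ℚ_[p])^2 * ((c:ℤ) : ℚ_[p])) := by
      linear_combination hcK
    rw [hdiff, norm_mul]
    have h1 : ‖(p:ℚ_[p])^2‖ = (p:ℝ)^(-(2:ℤ)) := by
      rw [norm_pow, Padic.norm_p, inv_pow, ← zpow_natCast (p:ℝ) 2, ← zpow_neg]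
      norm_num
    rw [h1]
    have h2 : ‖((k*b/p : ℕ) : ℚ_[p])^2 * ((c:ℤ) : ℚ_[p])‖ ≤ 1 := by
      refine norm_mul_le_one_mul _ _ ?_ (Padic.norm_int_le_one c)
      rw [norm_pow]
      exact pow_le_one₀ (norm_nonneg _) (norm_nat_le_one _)
    calc (p:ℝ)^(-(2:ℤ)) * ‖_‖ ≤ (p:ℝ)^(-(2:ℤ)) * 1 := mul_le_mul_of_nonneg_left h2 hc2
      _ = (p:ℝ)^(-(2:ℤ)) := mul_one _
  have hLHS : (∑ k ∈ Ico 1 p, ((k * b % p : ℕ) : ℚ_[p])^n) = Sn := by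
    rw [hSI]
    exact sum_mul_mod b hb (fun j => (j:ℚ_[p])^n)
  have hRHS : (∑ k ∈ Ico 1 p, ((k:ℚ_[p])^n * (b:ℚ_[p])^n
        - (n:ℚ_[p]) * (b:ℚ_[p])^(n-1) * (p:ℚ_[p]) * ((k:ℚ_[p])^(n-1) * ((k * b / p : ℕ) : ℚ_[p]))))
      = Sn * (b:ℚ_[p])^n - (n:ℚ_[p]) * (b:ℚ_[p])^(n-1) * (p:ℚ_[p]) * Qn := by
    rw [Finset.sum_sub_distrib, ← Finset.sum_mul, ← Finset.mul_sum, hSI, hQn]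
  rw [hLHS, hRHS] at key
  have hSB : ‖Sn - (p:ℚ_[p]) * ((bernoulli n : ℚ) : ℚ_[p])‖ ≤ (p:ℝ)^(-(2:ℤ)) := SB2 h5 hev hn2
  have hfin : ((b:ℚ_[p])^n - 1) * ((p:ℚ_[p]) * ((bernoulli n : ℚ) : ℚ_[p]))
      - (n:ℚ_[p]) * (p:ℚ_[p]) * (b:ℚ_[p])^(n-1) * Qn
      = -(Sn - (Sn * (b:ℚ_[p])^n - (n:ℚ_[p]) * (b:ℚ_[p])^(n-1) * (p:ℚ_[p]) * Qn))
        - (((b:ℚ_[p])^n - 1) * (Sn - (p:ℚ_[p]) * ((bernoulli n : ℚ) : ℚ_[p]))) := by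
    ring
  rw [hfin]
  refine le_trans (norm_sub_le_max _ _) (max_le ?_ ?_)
  · rw [norm_neg]
    exact key
  · exact norm_mul_le_one_mul _ _ (norm_pow_sub_one_le b n) hSB

lemma exists_good_b (h5 : 5 ≤ p) : ∃ b : ℕ, ¬ p ∣ b ∧ ((b : ZMod p))^(p-3) ≠ 1 := by
  obtain ⟨g, hg⟩ := IsCyclic.exists_generator (α := (ZMod p)ˣ)
  have hcard : Fintype.card (ZMod p)ˣ = p - 1 := ZMod.card_units p
  have horder : orderOf g = p - 1 := by
    rw [orderOf_eq_card_of_forall_mem_zpowers hg, Nat.card_eq_fintype_card, hcard]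
  refine ⟨((g : ZMod p)).val, ?_, ?_⟩
  · intro hdvd
    have h0 : (((g : ZMod p).val : ℕ) : ZMod p) = 0 := by
      rw [ZMod.natCast_eq_zero_iff]
      exact hdvd
    rw [ZMod.natCast_rightInverse (g : ZMod p)] at h0
    exact (Units.ne_zero g) h0
  · intro h1
    rw [ZMod.natCast_rightInverse (g : ZMod p)] at h1
    have h2 : g^(p-3) = 1 := by
      ext
      push_cast
      exact h1
    have h3 := orderOf_dvd_of_pow_eq_one h2
    rw [horder] at h3
    have := Nat.le_of_dvd (by omega) h3
    omega

lemma kummer (h5 : 5 ≤ p) :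
    ‖3 * ((bernoulli (2*p-4) : ℚ) : ℚ_[p]) - 4 * ((bernoulli (p-3) : ℚ) : ℚ_[p])‖
      ≤ (p:ℝ)^(-(1:ℤ)) := by
  obtain ⟨b, hb, hbu⟩ := exists_good_b h5
  have hp0 : 0 < p := hp.out.pos
  have hP0 : (0:ℝ) < p := by exact_mod_cast hp0
  have hne : (p:ℝ) ≠ 0 := ne_of_gt hP0
  have hbz : (b : ZMod p) ≠ 0 := by
    simpa [ZMod.natCast_eq_zero_iff] using hb
  set n₁ := 2*p-4 with hn₁
  set n₂ := p-3 with hn₂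
  have hoddp : Odd p := hp.out.odd_of_ne_two (by omega)
  obtain ⟨mm, hmm⟩ := hoddp
  have hev₁ : Even n₁ := ⟨p-2, by omega⟩
  have hev₂ : Even n₂ := ⟨mm-1, by omega⟩
  have h2n₁ : 2 ≤ n₁ := by omega
  have h2n₂ : 2 ≤ n₂ := by omega
  set B₁ : ℚ_[p] := ((bernoulli n₁ : ℚ) : ℚ_[p]) with hB₁
  set B₂ : ℚ_[p] := ((bernoulli n₂ : ℚ) : ℚ_[p]) with hB₂
  set Q₁ : ℚ_[p] := ∑ k ∈ Ico 1 p, (k:ℚ_[p])^(n₁-1) * ((k * b / p : ℕ) : ℚ_[p]) with hQ₁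
  set Q₂ : ℚ_[p] := ∑ k ∈ Ico 1 p, (k:ℚ_[p])^(n₂-1) * ((k * b / p : ℕ) : ℚ_[p]) with hQ₂
  set α' : ℚ_[p] := (b:ℚ_[p])^n₁ - 1 with hα'
  set α : ℚ_[p] := (b:ℚ_[p])^n₂ - 1 with hα
  set β' : ℚ_[p] := (b:ℚ_[p])^(n₁-1) with hβ'
  set β : ℚ_[p] := (b:ℚ_[p])^(n₂-1) with hβ
  set N₁ : ℚ_[p] := (n₁ : ℚ_[p]) with hN₁
  set N₂ : ℚ_[p] := (n₂ : ℚ_[p]) with hN₂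
  have hc1 : (0:ℝ) ≤ (p:ℝ)^(-(1:ℤ)) := by positivity
  -- divide voronoi by p
  have hXgen : ∀ (n : ℕ), Even n → 2 ≤ n →
      ‖((b:ℚ_[p])^n - 1) * ((bernoulli n : ℚ) : ℚ_[p]) - (n:ℚ_[p]) * (b:ℚ_[p])^(n-1)
        * (∑ k ∈ Ico 1 p, (k:ℚ_[p])^(n-1) * ((k * b / p : ℕ) : ℚ_[p]))‖ ≤ (p:ℝ)^(-(1:ℤ)) := by
    intro n hev hn2
    set X : ℚ_[p] := ((b:ℚ_[p])^n - 1) * ((bernoulli n : ℚ) : ℚ_[p]) - (n:ℚ_[p]) * (b:ℚ_[p])^(n-1)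
        * (∑ k ∈ Ico 1 p, (k:ℚ_[p])^(n-1) * ((k * b / p : ℕ) : ℚ_[p])) with hX
    have hfac : ((b:ℚ_[p])^n - 1) * ((p:ℚ_[p]) * ((bernoulli n : ℚ) : ℚ_[p]))
        - (n:ℚ_[p]) * (p:ℚ_[p]) * (b:ℚ_[p])^(n-1)
          * (∑ k ∈ Ico 1 p, (k:ℚ_[p])^(n-1) * ((k * b / p : ℕ) : ℚ_[p]))
        = (p:ℚ_[p]) * X := by
      rw [hX]; ring
    have h' := voronoi h5 b hb hev hn2
    rw [hfac, norm_mul, Padic.norm_p] at h'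
    calc ‖X‖ = (p:ℝ) * ((p:ℝ)⁻¹ * ‖X‖) := by field_simp
      _ ≤ (p:ℝ) * (p:ℝ)^(-(2:ℤ)) := mul_le_mul_of_nonneg_left h' (le_of_lt hP0)
      _ = (p:ℝ)^(-(1:ℤ)) := by
          rw [show (-(1:ℤ)) = 1 + -2 by norm_num, zpow_add₀ hne, zpow_one]
  have hX₁ : ‖α' * B₁ - N₁ * β' * Q₁‖ ≤ (p:ℝ)^(-(1:ℤ)) := hXgen n₁ hev₁ h2n₁
  have hX₂ : ‖α * B₂ - N₂ * β * Q₂‖ ≤ (p:ℝ)^(-(1:ℤ)) := hXgen n₂ hev₂ h2n₂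
  have hpinv : ((p:ℝ))⁻¹ = (p:ℝ)^(-(1:ℤ)) := by
    rw [zpow_neg, zpow_one]
  -- auxiliary small facts
  have hoexp : n₁ = n₂ + (p-1) := by omega
  have hoexp1 : n₁ - 1 = (n₂ - 1) + (p-1) := by omega
  have hβd : ‖β' - β‖ ≤ (p:ℝ)^(-(1:ℤ)) := by
    rw [hβ', hβ, hoexp1, pow_add]
    have : (b:ℚ_[p])^(n₂-1) * (b:ℚ_[p])^(p-1) - (b:ℚ_[p])^(n₂-1)
        = (b:ℚ_[p])^(n₂-1) * ((b:ℚ_[p])^(p-1) - 1) := by ring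
    rw [this]
    rw [← hpinv]
    refine norm_mul_le_one_mul _ _ ?_ (norm_fermat hb)
    rw [norm_pow]
    exact pow_le_one₀ (norm_nonneg _) (norm_nat_le_one b)
  have hαd : ‖α' - α‖ ≤ (p:ℝ)^(-(1:ℤ)) := by
    rw [hα', hα, hoexp, pow_add]
    have : (b:ℚ_[p])^(n₂) * (b:ℚ_[p])^(p-1) - 1 - ((b:ℚ_[p])^(n₂) - 1)
        = (b:ℚ_[p])^(n₂) * ((b:ℚ_[p])^(p-1) - 1) := by ring
    rw [this]
    rw [← hpinv]
    refine norm_mul_le_one_mul _ _ ?_ (norm_fermat hb)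
    rw [norm_pow]
    exact pow_le_one₀ (norm_nonneg _) (norm_nat_le_one b)
  have hQd : ‖Q₁ - Q₂‖ ≤ (p:ℝ)^(-(1:ℤ)) := by
    rw [hQ₁, hQ₂, ← Finset.sum_sub_distrib]
    refine norm_sum_le_max _ _ hc1 fun k hk => ?_
    have hknd : ¬ p ∣ k := not_dvd_of_mem_Ico hk
    have : (k:ℚ_[p])^(n₁-1) * ((k * b / p : ℕ) : ℚ_[p]) - (k:ℚ_[p])^(n₂-1) * ((k * b / p : ℕ) : ℚ_[p])
        = ((k:ℚ_[p])^(n₂-1) * ((k * b / p : ℕ) : ℚ_[p])) * ((k:ℚ_[p])^(p-1) - 1) := by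
      rw [hoexp1, pow_add]; ring
    rw [this, ← hpinv]
    refine norm_mul_le_one_mul _ _ ?_ (norm_fermat hknd)
    refine norm_mul_le_one_mul _ _ ?_ (norm_nat_le_one _)
    rw [norm_pow]
    exact pow_le_one₀ (norm_nonneg _) (norm_nat_le_one k)
  have hQ₂le : ‖Q₂‖ ≤ 1 := by
    refine norm_sum_le_max _ _ zero_le_one fun k hk => ?_
    refine norm_mul_le_one_mul _ _ ?_ (norm_nat_le_one _)
    rw [norm_pow]
    exact pow_le_one₀ (norm_nonneg _) (norm_nat_le_one k)
  have hQ₁le : ‖Q₁‖ ≤ 1 := by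
    refine norm_sum_le_max _ _ zero_le_one fun k hk => ?_
    refine norm_mul_le_one_mul _ _ ?_ (norm_nat_le_one _)
    rw [norm_pow]
    exact pow_le_one₀ (norm_nonneg _) (norm_nat_le_one k)
  -- norms of α, α' are 1
  have hcastα : ∀ m : ℕ, (b:ℚ_[p])^m - 1 = (((b:ℤ)^m - 1 : ℤ) : ℚ_[p]) := by
    intro m; push_cast; ring
  have hαzm : ∀ m : ℕ, ((b : ZMod p))^m ≠ 1 → ‖(b:ℚ_[p])^m - 1‖ = 1 := by
    intro m hm
    rw [hcastα m]
    refine norm_int_eq_one fun hdvd => ?_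
    have h0 : (((b:ℤ)^m - 1 : ℤ) : ZMod p) = 0 := (ZMod.intCast_zmod_eq_zero_iff_dvd _ p).2 hdvd
    push_cast at h0
    apply hm
    have : ((b:ZMod p))^m - 1 = 0 := by exact_mod_cast h0
    linear_combination this
  have hα1 : ‖α‖ = 1 := by
    rw [hα]
    exact hαzm n₂ hbu
  have hα'1 : ‖α'‖ = 1 := by
    rw [hα']
    refine hαzm n₁ ?_
    intro hcon
    apply hbu
    have hfer : ((b : ZMod p))^(p-1) = 1 := ZMod.pow_card_sub_one_eq_one hbz
    rw [hoexp, pow_add, hfer, mul_one] at hcon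
    exact hcon
  -- coefficient identity
  have hN : 3*N₁ - 4*N₂ = 2*(p:ℚ_[p]) := by
    rw [hN₁, hN₂, hn₁, hn₂]
    rw [Nat.cast_sub (by omega), Nat.cast_sub (by omega)]
    push_cast
    ring
  -- main algebraic identity
  have hmain : α * α' * (3*B₁ - 4*B₂)
      = (3*α) * (α'*B₁ - N₁*β'*Q₁) + (-(4:ℚ_[p])*α') * (α*B₂ - N₂*β*Q₂)
        + (3*N₁*α*Q₁) * (β' - β) + (3*N₁*α*β) * (Q₁ - Q₂)
        + (-(4:ℚ_[p])*N₂*β*Q₂) * (α' - α) + ((2:ℚ_[p])*α*β*Q₂) * (p:ℚ_[p]) := by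
    have h6 : (2:ℚ_[p])*(p:ℚ_[p]) = 3*N₁ - 4*N₂ := hN.symm
    linear_combination (-(α*β*Q₂)) * h6
  -- bound all six terms
  have hn3 : ‖(3:ℚ_[p])‖ ≤ 1 := by
    have : ((3:ℕ):ℚ_[p]) = 3 := by norm_num
    rw [← this]; exact norm_nat_le_one 3
  have hn4 : ‖(-(4:ℚ_[p]))‖ ≤ 1 := by
    rw [norm_neg]
    have : ((4:ℕ):ℚ_[p]) = 4 := by norm_num
    rw [← this]; exact norm_nat_le_one 4
  have hn2' : ‖(2:ℚ_[p])‖ ≤ 1 := by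
    have : ((2:ℕ):ℚ_[p]) = 2 := by norm_num
    rw [← this]; exact norm_nat_le_one 2
  have hα'le : ‖α'‖ ≤ 1 := le_of_eq hα'1
  have hαle : ‖α‖ ≤ 1 := le_of_eq hα1
  have hβle : ‖β‖ ≤ 1 := by
    rw [hβ, norm_pow]; exact pow_le_one₀ (norm_nonneg _) (norm_nat_le_one b)
  have hN₁le : ‖N₁‖ ≤ 1 := norm_nat_le_one _
  have hN₂le : ‖N₂‖ ≤ 1 := norm_nat_le_one _
  have ht1 : ‖(3*α) * (α'*B₁ - N₁*β'*Q₁)‖ ≤ (p:ℝ)^(-(1:ℤ)) :=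
    norm_mul_le_one_mul _ _ (norm_mul_le_one_mul _ _ hn3 hαle) hX₁
  have ht2 : ‖(-(4:ℚ_[p])*α') * (α*B₂ - N₂*β*Q₂)‖ ≤ (p:ℝ)^(-(1:ℤ)) :=
    norm_mul_le_one_mul _ _ (norm_mul_le_one_mul _ _ hn4 hα'le) hX₂
  have ht3 : ‖(3*N₁*α*Q₁) * (β' - β)‖ ≤ (p:ℝ)^(-(1:ℤ)) :=
    norm_mul_le_one_mul _ _
      (norm_mul_le_one_mul _ _ (norm_mul_le_one_mul _ _ (norm_mul_le_one_mul _ _ hn3 hN₁le) hαle) hQ₁le) hβd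
  have ht4 : ‖(3*N₁*α*β) * (Q₁ - Q₂)‖ ≤ (p:ℝ)^(-(1:ℤ)) :=
    norm_mul_le_one_mul _ _
      (norm_mul_le_one_mul _ _ (norm_mul_le_one_mul _ _ (norm_mul_le_one_mul _ _ hn3 hN₁le) hαle) hβle) hQd
  have ht5 : ‖(-(4:ℚ_[p])*N₂*β*Q₂) * (α' - α)‖ ≤ (p:ℝ)^(-(1:ℤ)) :=
    norm_mul_le_one_mul _ _
      (norm_mul_le_one_mul _ _ (norm_mul_le_one_mul _ _ (norm_mul_le_one_mul _ _ hn4 hN₂le) hβle) hQ₂le) hαd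
  have ht6 : ‖((2:ℚ_[p])*α*β*Q₂) * (p:ℚ_[p])‖ ≤ (p:ℝ)^(-(1:ℤ)) := by
    refine norm_mul_le_one_mul _ _ ?_ (le_of_eq (by rw [Padic.norm_p, hpinv]))
    exact norm_mul_le_one_mul _ _ (norm_mul_le_one_mul _ _ (norm_mul_le_one_mul _ _ hn2' hαle) hβle) hQ₂le
  have hsum : ‖α * α' * (3*B₁ - 4*B₂)‖ ≤ (p:ℝ)^(-(1:ℤ)) := by
    rw [hmain]
    refine le_trans (Padic.nonarchimedean _ _) (max_le ?_ ht6)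
    refine le_trans (Padic.nonarchimedean _ _) (max_le ?_ ht5)
    refine le_trans (Padic.nonarchimedean _ _) (max_le ?_ ht4)
    refine le_trans (Padic.nonarchimedean _ _) (max_le ?_ ht3)
    exact le_trans (Padic.nonarchimedean _ _) (max_le ht1 ht2)
  rw [norm_mul, norm_mul, hα1, hα'1, one_mul, one_mul] at hsum
  exact hsum

lemma prod_pair_Ico (m : ℕ) (f : ℕ → ℚ_[p]) :
    ∏ k ∈ Ico 1 (2*m+1), f k = ∏ k ∈ Ico 1 (m+1), (f k * f (2*m+1-k)) := by
  rw [← Finset.prod_Ico_consecutive f (by omega : 1 ≤ m+1) (by omega : m+1 ≤ 2*m+1)]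
  rw [Finset.prod_mul_distrib]
  congr 1
  refine Finset.prod_nbij' (i := fun k => 2*m+1-k) (j := fun k => 2*m+1-k) ?_ ?_ ?_ ?_ ?_ <;>
    intro b hb <;> simp only [mem_Ico] at hb ⊢ <;> try omega
  congr 1
  omega

lemma sum_pair_Ico (m : ℕ) (f : ℕ → ℚ_[p]) :
    ∑ k ∈ Ico 1 (2*m+1), f k = ∑ k ∈ Ico 1 (m+1), (f k + f (2*m+1-k)) := by
  rw [← Finset.sum_Ico_consecutive f (by omega : 1 ≤ m+1) (by omega : m+1 ≤ 2*m+1)]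
  rw [Finset.sum_add_distrib]
  congr 1
  refine Finset.sum_nbij' (i := fun k => 2*m+1-k) (j := fun k => 2*m+1-k) ?_ ?_ ?_ ?_ ?_ <;>
    intro b hb <;> simp only [mem_Ico] at hb ⊢ <;> try omega
  congr 1
  omega

lemma norm_prod_one_add_sub_one {ι : Type*} (s : Finset ι) (f : ι → ℚ_[p]) {ε : ℝ}
    (hε0 : 0 ≤ ε) (hε1 : ε ≤ 1) (h : ∀ i ∈ s, ‖f i‖ ≤ ε) :
    ‖∏ i ∈ s, (1 + f i) - 1‖ ≤ ε := by
  classical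
  induction s using Finset.induction with
  | empty => simpa using hε0
  | insert a s' hx ih =>
    rw [Finset.prod_insert hx]
    have hP : ‖∏ i ∈ s', (1 + f i) - 1‖ ≤ ε := ih (fun i hi => h i (mem_insert_of_mem hi))
    have hPle : ‖∏ i ∈ s', (1 + f i)‖ ≤ 1 := by
      have he : (∏ i ∈ s', (1+f i)) = (∏ i ∈ s', (1+f i) - 1) + 1 := by ring
      rw [he]
      refine le_trans (Padic.nonarchimedean _ _) (max_le (le_trans hP hε1) ?_)
      rw [norm_one]
    have key : (1 + f a) * ∏ i ∈ s', (1 + f i) - 1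
        = (∏ i ∈ s', (1 + f i) - 1) + (∏ i ∈ s', (1 + f i)) * f a := by ring
    rw [key]
    refine le_trans (Padic.nonarchimedean _ _) (max_le hP ?_)
    exact norm_mul_le_one_mul _ _ hPle (h a (mem_insert_self a s'))

lemma norm_prod_one_add_sub_sum {ι : Type*} (s : Finset ι) (f : ι → ℚ_[p]) {ε : ℝ}
    (hε0 : 0 ≤ ε) (hε1 : ε ≤ 1) (h : ∀ i ∈ s, ‖f i‖ ≤ ε) :
    ‖∏ i ∈ s, (1 + f i) - 1 - ∑ i ∈ s, f i‖ ≤ ε^2 := by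
  classical
  induction s using Finset.induction with
  | empty => simpa using by positivity
  | insert a s' hx ih =>
    rw [Finset.prod_insert hx, Finset.sum_insert hx]
    have hP : ‖∏ i ∈ s', (1 + f i) - 1 - ∑ i ∈ s', f i‖ ≤ ε^2 :=
      ih (fun i hi => h i (mem_insert_of_mem hi))
    have hP1 : ‖∏ i ∈ s', (1 + f i) - 1‖ ≤ ε :=
      norm_prod_one_add_sub_one s' f hε0 hε1 (fun i hi => h i (mem_insert_of_mem hi))
    have key : (1 + f a) * ∏ i ∈ s', (1 + f i) - 1 - (f a + ∑ i ∈ s', f i)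
        = (∏ i ∈ s', (1 + f i) - 1 - ∑ i ∈ s', f i) + f a * (∏ i ∈ s', (1 + f i) - 1) := by
      ring
    rw [key]
    refine le_trans (Padic.nonarchimedean _ _) (max_le hP ?_)
    rw [norm_mul, sq]
    exact mul_le_mul (h a (mem_insert_self a s')) hP1 (norm_nonneg _) hε0

lemma choose_prod (h5 : 5 ≤ p) :
    ((Nat.choose (2*p-1) (p-1) : ℕ) : ℚ) = ∏ k ∈ Ico 1 p, (((p:ℚ)+k)/k) := by
  have hupnat : (∏ k ∈ Ico 1 p, (p+k)) = ∏ j ∈ Ico (1+p) (p+p), j :=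
    Finset.prod_Ico_add (fun j => j) 1 p p
  have hfact1 : (∏ k ∈ Ico 1 p, k) = Nat.factorial (p-1) := by
    have := Finset.prod_Ico_id_eq_factorial (p-1)
    rwa [show p-1+1 = p from by omega] at this
  have hfact2 : (∏ k ∈ Ico 1 (p+p), k) = Nat.factorial (2*p-1) := by
    have := Finset.prod_Ico_id_eq_factorial (2*p-1)
    rwa [show 2*p-1+1 = p+p from by omega] at this
  have hsplit : (∏ k ∈ Ico 1 (1+p), k) * (∏ k ∈ Ico (1+p) (p+p), k) = ∏ k ∈ Ico 1 (p+p), k :=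
    Finset.prod_Ico_consecutive _ (by omega) (by omega)
  have hfact3 : (∏ k ∈ Ico 1 (1+p), k) = Nat.factorial p := by
    have := Finset.prod_Ico_id_eq_factorial p
    rwa [show p+1 = 1+p from by omega] at this
  have hch := Nat.choose_mul_factorial_mul_factorial (show p-1 ≤ 2*p-1 by omega)
  rw [show 2*p-1-(p-1) = p from by omega] at hch
  have hnat : (∏ k ∈ Ico 1 p, (p+k)) * Nat.factorial p = Nat.factorial (2*p-1) := by
    rw [hupnat, ← hfact2, ← hsplit, hfact3]
    ring
  have hAq : (∏ k ∈ Ico 1 p, ((p:ℚ)+k)) * ((Nat.factorial p : ℕ):ℚ)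
      = ((Nat.factorial (2*p-1) : ℕ) : ℚ) := by
    have := congrArg (Nat.cast : ℕ → ℚ) hnat
    push_cast at this
    exact_mod_cast this
  have hBq : (∏ k ∈ Ico 1 p, (k:ℚ)) = ((Nat.factorial (p-1) : ℕ) : ℚ) := by
    have := congrArg (Nat.cast : ℕ → ℚ) hfact1
    push_cast at this
    exact_mod_cast this
  have hchq : ((Nat.choose (2*p-1) (p-1) : ℕ) : ℚ) * ((Nat.factorial (p-1) : ℕ):ℚ)
      * ((Nat.factorial p : ℕ):ℚ) = ((Nat.factorial (2*p-1) : ℕ) : ℚ) := by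
    have := congrArg (Nat.cast : ℕ → ℚ) hch
    push_cast at this
    exact_mod_cast this
  have hprodk_ne : (∏ k ∈ Ico 1 p, (k:ℚ)) ≠ 0 := by
    rw [hBq]
    exact Nat.cast_ne_zero.mpr (Nat.factorial_ne_zero _)
  have hfne : ((Nat.factorial p : ℕ):ℚ) ≠ 0 := Nat.cast_ne_zero.mpr (Nat.factorial_ne_zero _)
  rw [Finset.prod_div_distrib, eq_div_iff hprodk_ne]
  apply mul_right_cancel₀ hfne
  linear_combination (((Nat.choose (2*p-1) (p-1) : ℕ):ℚ) * ((Nat.factorial p : ℕ):ℚ)) * hBq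
    + hchq - hAq

lemma sum_Ico_pow_eq (n : ℕ) (hn : 1 ≤ n) :
    ((∑ k ∈ range p, (k:ℚ)^n : ℚ) : ℚ_[p]) = ∑ k ∈ Ico 1 p, (k:ℚ_[p])^n := by
  have hp0 : 0 < p := hp.out.pos
  push_cast
  rw [Finset.range_eq_Ico, Finset.sum_eq_sum_sdiff_singleton_add
    (Finset.mem_Ico.2 (by omega : 0 ≤ 0 ∧ 0 < p)) (fun k => (k:ℚ_[p])^n)]
  have hzt : ((0:ℕ):ℚ_[p])^n = 0 := by
    rw [Nat.cast_zero]
    exact zero_pow (by omega)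
  rw [hzt, add_zero]
  congr 1
  ext x
  simp only [Finset.mem_sdiff, Finset.mem_Ico, Finset.mem_singleton]
  omega

/-- `1/(k(p-k))` as an element of `ℚ_[p]`. -/
noncomputable def gk (p : ℕ) [Fact p.Prime] (k : ℕ) : ℚ_[p] :=
  ((k:ℚ_[p]) * ((p:ℚ_[p]) - k))⁻¹

lemma main_bound (h5 : 5 ≤ p) :
    ‖(((Nat.choose (2*p-1) (p-1) : ℚ) - 1 + (2/3) * (p:ℚ)^3 * bernoulli (p-3) : ℚ) : ℚ_[p])‖
      ≤ (p:ℝ)^(-(4:ℤ)) := by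
  have hp0 : 0 < p := hp.out.pos
  have hP1 : (1:ℝ) < p := by exact_mod_cast (by omega : 1 < p)
  have hP0 : (0:ℝ) < p := by linarith
  have hne : (p:ℝ) ≠ 0 := ne_of_gt hP0
  obtain ⟨mm, hmm⟩ : Odd p := hp.out.odd_of_ne_two (by omega)
  have hc4 : (0:ℝ) ≤ (p:ℝ)^(-(4:ℤ)) := by positivity
  have hc2 : (0:ℝ) ≤ (p:ℝ)^(-(2:ℤ)) := by positivity
  have hc1 : (0:ℝ) ≤ (p:ℝ)^(-(1:ℤ)) := by positivity
  have hppow : ∀ j : ℕ, ‖(p:ℚ_[p])^j‖ = (p:ℝ)^(-(j:ℤ)) := by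
    intro j
    rw [norm_pow, Padic.norm_p, inv_pow, ← zpow_natCast (p:ℝ) j, ← zpow_neg]
  have hpp2 : ‖(p:ℚ_[p])^2‖ = (p:ℝ)^(-(2:ℤ)) := by rw [hppow 2]; norm_num
  have hpp3 : ‖(p:ℚ_[p])^3‖ = (p:ℝ)^(-(3:ℤ)) := by rw [hppow 3]; norm_num
  have h2le : ‖(2:ℚ_[p])‖ ≤ 1 := by
    have : ((2:ℕ):ℚ_[p]) = 2 := by norm_num
    rw [← this]; exact norm_nat_le_one 2
  have hknz : ∀ k, k ∈ Ico 1 p → ((k:ℚ_[p]) ≠ 0 ∧ (p:ℚ_[p]) - (k:ℚ_[p]) ≠ 0) := by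
    intro k hk
    rw [mem_Ico] at hk
    have hcast : ((p-k:ℕ):ℚ_[p]) = (p:ℚ_[p]) - k := by
      rw [Nat.cast_sub (by omega)]
    constructor
    · exact Nat.cast_ne_zero.mpr (by omega : k ≠ 0)
    · rw [← hcast]
      exact Nat.cast_ne_zero.mpr (by omega : p - k ≠ 0)
  have hgnorm : ∀ k, k ∈ Ico 1 p → ‖gk p k‖ = 1 := by
    intro k hk
    have hk' := mem_Ico.mp hk
    have hcast : ((p-k:ℕ):ℚ_[p]) = (p:ℚ_[p]) - k := by
      rw [Nat.cast_sub (by omega)]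
    unfold gk
    rw [← hcast, ← Nat.cast_mul, norm_inv, norm_nat_eq_one ?_, inv_one]
    intro hdvd
    rcases (Nat.Prime.dvd_mul hp.out).1 hdvd with h' | h'
    · exact absurd (Nat.le_of_dvd (by omega) h') (by omega)
    · exact absurd (Nat.le_of_dvd (by omega) h') (by omega)
  -- p-adic size conversions
  have hzz : (p:ℝ)^(-(2:ℤ)) * (p:ℝ)^(-(2:ℤ)) = (p:ℝ)^(-(4:ℤ)) := by
    rw [← zpow_add₀ hne]; norm_num
  have hz31 : (p:ℝ)^(-(3:ℤ)) * (p:ℝ)^(-(1:ℤ)) = (p:ℝ)^(-(4:ℤ)) := by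
    rw [← zpow_add₀ hne]; norm_num
  have hinv1 : (p:ℝ)⁻¹ = (p:ℝ)^(-(1:ℤ)) := by rw [zpow_neg, zpow_one]
  have hz11 : (p:ℝ)⁻¹ * (p:ℝ)^(-(1:ℤ)) = (p:ℝ)^(-(2:ℤ)) := by
    rw [hinv1, ← zpow_add₀ hne]; norm_num
  have hinvsq : (p:ℝ)⁻¹ * (p:ℝ)⁻¹ = (p:ℝ)^(-(2:ℤ)) := by
    rw [hinv1, ← zpow_add₀ hne]; norm_num
  have hmon : ∀ x y : ℤ, x ≤ y → (p:ℝ)^x ≤ (p:ℝ)^y := fun x y h =>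
    zpow_le_zpow_right₀ (le_of_lt hP1) h
  have hle1 : ∀ x : ℤ, x ≤ 0 → (p:ℝ)^x ≤ 1 := by
    intro x hx
    have := hmon x 0 hx
    rwa [zpow_zero] at this
  -- Step A : the binomial coefficient as a paired product
  have hCK : ((Nat.choose (2*p-1) (p-1) : ℕ) : ℚ_[p]) = ∏ k ∈ Ico 1 p, (((p:ℚ_[p]) + (k:ℚ_[p])) / (k:ℚ_[p])) := by
    have := congrArg (fun q : ℚ => (q : ℚ_[p])) (choose_prod (p := p) h5)
    push_cast at this
    exact_mod_cast this
  have hpairing := prod_pair_Ico (p := p) mm (fun k => ((p:ℚ_[p]) + (k:ℚ_[p])) / (k:ℚ_[p]))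
  rw [show 2*mm+1 = p from hmm.symm] at hpairing
  have hfk : ∀ k ∈ Ico 1 (mm+1),
      (((p:ℚ_[p]) + (k:ℚ_[p])) / (k:ℚ_[p])) * (((p:ℚ_[p]) + ((p-k : ℕ):ℚ_[p])) / ((p-k : ℕ):ℚ_[p])) = 1 + 2*(p:ℚ_[p])^2 * gk p k := by
    intro k hk
    rw [mem_Ico] at hk
    have hkI : k ∈ Ico 1 p := mem_Ico.mpr ⟨by omega, by omega⟩
    obtain ⟨hk0, hpk0⟩ := hknz k hkI
    have hcast : ((p-k:ℕ):ℚ_[p]) = (p:ℚ_[p]) - k := by rw [Nat.cast_sub (by omega)]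
    rw [hcast]
    unfold gk
    field_simp
    ring
  have hprod : ((Nat.choose (2*p-1) (p-1) : ℕ) : ℚ_[p])
      = ∏ k ∈ Ico 1 (mm+1), (1 + 2*(p:ℚ_[p])^2 * gk p k) := by
    rw [hCK, hpairing]
    exact Finset.prod_congr rfl hfk
  -- Step B : expand the product to first order
  have hanorm : ∀ k ∈ Ico 1 (mm+1), ‖2*(p:ℚ_[p])^2 * gk p k‖ ≤ (p:ℝ)^(-(2:ℤ)) := by
    intro k hk
    rw [mem_Ico] at hk
    have hkI : k ∈ Ico 1 p := mem_Ico.mpr ⟨by omega, by omega⟩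
    have he : 2*(p:ℚ_[p])^2 * gk p k = (2 * gk p k) * (p:ℚ_[p])^2 := by ring
    rw [he]
    refine norm_mul_le_one_mul _ _ ?_ (le_of_eq hpp2)
    exact norm_mul_le_one_mul _ _ h2le (le_of_eq (hgnorm k hkI))
  have hstep1 : Aeq ((p:ℝ)^(-(4:ℤ))) ((Nat.choose (2*p-1) (p-1) : ℕ) : ℚ_[p])
      (1 + ∑ k ∈ Ico 1 (mm+1), 2*(p:ℚ_[p])^2 * gk p k) := by
    unfold Aeq
    rw [hprod]
    have h := norm_prod_one_add_sub_sum (Ico 1 (mm+1)) (fun k => 2*(p:ℚ_[p])^2 * gk p k)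
      hc2 (hle1 _ (by norm_num)) hanorm
    have hsq : ((p:ℝ)^(-(2:ℤ)))^2 = (p:ℝ)^(-(4:ℤ)) := by rw [sq, hzz]
    rw [hsq] at h
    have he : (∏ k ∈ Ico 1 (mm+1), (1 + 2*(p:ℚ_[p])^2 * gk p k))
        - (1 + ∑ k ∈ Ico 1 (mm+1), 2*(p:ℚ_[p])^2 * gk p k)
        = (∏ k ∈ Ico 1 (mm+1), (1 + 2*(p:ℚ_[p])^2 * gk p k)) - 1
          - ∑ k ∈ Ico 1 (mm+1), 2*(p:ℚ_[p])^2 * gk p k := by ring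
    rw [he]
    exact h
  -- Step C : fold the half sum to a full sum
  have hsum2 : (1:ℚ_[p]) + ∑ k ∈ Ico 1 (mm+1), 2*(p:ℚ_[p])^2 * gk p k
      = 1 + (p:ℚ_[p])^2 * ∑ k ∈ Ico 1 p, gk p k := by
    congr 1
    have hs := sum_pair_Ico (p := p) mm (gk p)
    rw [show 2*mm+1 = p from hmm.symm] at hs
    have hsym : ∀ k ∈ Ico 1 (mm+1), gk p (p-k) = gk p k := by
      intro k hk
      rw [mem_Ico] at hk
      unfold gk
      have hcast : ((p-k:ℕ):ℚ_[p]) = (p:ℚ_[p]) - k := by rw [Nat.cast_sub (by omega)]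
      rw [hcast]
      congr 1
      ring
    rw [hs, Finset.mul_sum]
    apply Finset.sum_congr rfl
    intro k hk
    rw [hsym k hk]
    ring
  -- Step D : per-k expansion of gk in powers
  have hpk : ∀ k ∈ Ico 1 p,
      Aeq ((p:ℝ)^(-(2:ℤ))) (gk p k)
        ((k:ℚ_[p])^(2*p-4) - 2*(k:ℚ_[p])^(p-3) - (p:ℚ_[p])*(k:ℚ_[p])^(p-4)) := by
    intro k hk
    obtain ⟨hk0, hpk0⟩ := hknz k hk
    have hknd : ¬ p ∣ k := not_dvd_of_mem_Ico hk
    have hknorm : ‖(k:ℚ_[p])‖ = 1 := norm_nat_eq_one hknd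
    have hk2 : (k:ℚ_[p])^2 ≠ 0 := pow_ne_zero _ hk0
    have hk3 : (k:ℚ_[p])^3 ≠ 0 := pow_ne_zero _ hk0
    have hk2inv : ‖((k:ℚ_[p])^2)⁻¹‖ ≤ 1 := by
      rw [norm_inv, norm_pow, hknorm]; norm_num
    have hk3inv : ‖((k:ℚ_[p])^3)⁻¹‖ ≤ 1 := by
      rw [norm_inv, norm_pow, hknorm]; norm_num
    have e1 : (k:ℚ_[p])^(p-3) * (k:ℚ_[p])^2 = (k:ℚ_[p])^(p-1) := by
      rw [← pow_add]; congr 1; omega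
    have e2 : (k:ℚ_[p])^(2*p-4) * (k:ℚ_[p])^2 = ((k:ℚ_[p])^(p-1))^2 := by
      rw [← pow_add, ← pow_mul]; congr 1; omega
    have e3 : (k:ℚ_[p])^(p-4) * (k:ℚ_[p])^3 = (k:ℚ_[p])^(p-1) := by
      rw [← pow_add]; congr 1; omega
    have hginv : gk p k = -(((k:ℚ_[p])^2)⁻¹) - (p:ℚ_[p])*((k:ℚ_[p])^3)⁻¹
        + (p:ℚ_[p])^2 * ((k:ℚ_[p])^3 * ((p:ℚ_[p]) - k))⁻¹ := by
      unfold gk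
      field_simp
      ring
    have h12 : ((k:ℚ_[p])^2)⁻¹ * (k:ℚ_[p])^2 = 1 := inv_mul_cancel₀ hk2
    have h13 : ((k:ℚ_[p])^3)⁻¹ * (k:ℚ_[p])^3 = 1 := inv_mul_cancel₀ hk3
    have hmul : (2*(k:ℚ_[p])^(p-3) - (k:ℚ_[p])^(2*p-4)) * (k:ℚ_[p])^2 - 1
        = -(((k:ℚ_[p])^(p-1) - 1)^2) := by
      linear_combination 2*e1 - e2
    have hA : ‖2*(k:ℚ_[p])^(p-3) - (k:ℚ_[p])^(2*p-4) - ((k:ℚ_[p])^2)⁻¹‖ ≤ (p:ℝ)^(-(2:ℤ)) := by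
      have hid : 2*(k:ℚ_[p])^(p-3) - (k:ℚ_[p])^(2*p-4) - ((k:ℚ_[p])^2)⁻¹
          = -(((k:ℚ_[p])^(p-1) - 1)^2) * ((k:ℚ_[p])^2)⁻¹ := by
        apply mul_right_cancel₀ hk2
        linear_combination hmul + ((((k:ℚ_[p])^(p-1) - 1)^2) - 1) * h12
      rw [hid, norm_mul, norm_neg, norm_pow]
      calc ‖(k:ℚ_[p])^(p-1) - 1‖^2 * ‖((k:ℚ_[p])^2)⁻¹‖
          ≤ ((p:ℝ)⁻¹)^2 * 1 := by
            refine mul_le_mul ?_ hk2inv (norm_nonneg _) (by positivity)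
            exact pow_le_pow_left₀ (norm_nonneg _) (norm_fermat hknd) 2
        _ = (p:ℝ)^(-(2:ℤ)) := by rw [mul_one, sq, hinvsq]
    have hB : ‖(k:ℚ_[p])^(p-4) - ((k:ℚ_[p])^3)⁻¹‖ ≤ (p:ℝ)^(-(1:ℤ)) := by
      have hid : (k:ℚ_[p])^(p-4) - ((k:ℚ_[p])^3)⁻¹
          = ((k:ℚ_[p])^(p-1) - 1) * ((k:ℚ_[p])^3)⁻¹ := by
        apply mul_right_cancel₀ hk3
        linear_combination e3 + (-(k:ℚ_[p])^(p-1)) * h13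
      rw [hid, ← hinv1]
      rw [mul_comm]
      exact norm_mul_le_one_mul _ _ hk3inv (norm_fermat hknd)
    have hrle : ‖((k:ℚ_[p])^3 * ((p:ℚ_[p]) - k))⁻¹‖ ≤ 1 := by
      rw [norm_inv, norm_mul, norm_pow, hknorm]
      have hcast : ((p-k:ℕ):ℚ_[p]) = (p:ℚ_[p]) - k := by
        have hk' := mem_Ico.mp hk
        rw [Nat.cast_sub (by omega)]
      rw [← hcast, norm_nat_eq_one ?_]
      · norm_num
      · have hk' := mem_Ico.mp hk
        intro hdvd
        exact absurd (Nat.le_of_dvd (by omega) hdvd) (by omega)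
    unfold Aeq
    have hdec : gk p k - ((k:ℚ_[p])^(2*p-4) - 2*(k:ℚ_[p])^(p-3) - (p:ℚ_[p])*(k:ℚ_[p])^(p-4))
        = (2*(k:ℚ_[p])^(p-3) - (k:ℚ_[p])^(2*p-4) - ((k:ℚ_[p])^2)⁻¹)
          + (p:ℚ_[p]) * ((k:ℚ_[p])^(p-4) - ((k:ℚ_[p])^3)⁻¹)
          + (p:ℚ_[p])^2 * ((k:ℚ_[p])^3 * ((p:ℚ_[p]) - k))⁻¹ := by
      rw [hginv]; ring
    rw [hdec]
    refine le_trans (Padic.nonarchimedean _ _) (max_le ?_ ?_)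
    · refine le_trans (Padic.nonarchimedean _ _) (max_le hA ?_)
      rw [norm_mul, Padic.norm_p]
      calc (p:ℝ)⁻¹ * ‖(k:ℚ_[p])^(p-4) - ((k:ℚ_[p])^3)⁻¹‖
          ≤ (p:ℝ)⁻¹ * (p:ℝ)^(-(1:ℤ)) := by
            refine mul_le_mul_of_nonneg_left hB (by positivity)
        _ = (p:ℝ)^(-(2:ℤ)) := hz11
    · rw [norm_mul, hpp2]
      calc (p:ℝ)^(-(2:ℤ)) * ‖((k:ℚ_[p])^3 * ((p:ℚ_[p]) - k))⁻¹‖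
          ≤ (p:ℝ)^(-(2:ℤ)) * 1 := mul_le_mul_of_nonneg_left hrle hc2
        _ = _ := mul_one _
  -- Step E : sum the per-k congruences
  set S1 : ℚ_[p] := ∑ k ∈ Ico 1 p, (k:ℚ_[p])^(p-3) with hS1d
  set S2 : ℚ_[p] := ∑ k ∈ Ico 1 p, (k:ℚ_[p])^(2*p-4) with hS2d
  set S3 : ℚ_[p] := ∑ k ∈ Ico 1 p, (k:ℚ_[p])^(p-4) with hS3d
  have hUsum : Aeq ((p:ℝ)^(-(2:ℤ))) (∑ k ∈ Ico 1 p, gk p k) (S2 - 2*S1 - (p:ℚ_[p])*S3) := by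
    have h := Aeq.sum (Ico 1 p) (gk p)
      (fun k => (k:ℚ_[p])^(2*p-4) - 2*(k:ℚ_[p])^(p-3) - (p:ℚ_[p])*(k:ℚ_[p])^(p-4)) hc2 hpk
    have he : (∑ k ∈ Ico 1 p, ((k:ℚ_[p])^(2*p-4) - 2*(k:ℚ_[p])^(p-3) - (p:ℚ_[p])*(k:ℚ_[p])^(p-4)))
        = S2 - 2*S1 - (p:ℚ_[p])*S3 := by
      rw [hS1d, hS2d, hS3d, Finset.sum_sub_distrib, Finset.sum_sub_distrib,
        ← Finset.mul_sum, ← Finset.mul_sum]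
    rwa [he] at h
  -- Step F : replace power sums by Bernoulli numbers
  set B1 : ℚ_[p] := ((bernoulli (p-3) : ℚ) : ℚ_[p]) with hB1d
  set B2 : ℚ_[p] := ((bernoulli (2*p-4) : ℚ) : ℚ_[p]) with hB2d
  have hSB1 : ‖S1 - (p:ℚ_[p]) * B1‖ ≤ (p:ℝ)^(-(2:ℤ)) := by
    rw [hS1d, hB1d, ← sum_Ico_pow_eq (p-3) (by omega)]
    exact SB2 h5 ⟨mm-1, by omega⟩ (by omega)
  have hSB2 : ‖S2 - (p:ℚ_[p]) * B2‖ ≤ (p:ℝ)^(-(2:ℤ)) := by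
    rw [hS2d, hB2d, ← sum_Ico_pow_eq (2*p-4) (by omega)]
    exact SB2 h5 ⟨p-2, by omega⟩ (by omega)
  have hSB3 : ‖S3‖ ≤ (p:ℝ)^(-(1:ℤ)) := by
    rw [hS3d, ← sum_Ico_pow_eq (p-4) (by omega)]
    exact SB1 h5 ⟨mm-2, by omega⟩ (by omega)
  -- Step G : Kummer congruence
  have h3norm : ‖(3:ℚ_[p])‖ = 1 := by
    have h3 : ((3:ℕ):ℚ_[p]) = 3 := by norm_num
    rw [← h3]
    exact norm_nat_eq_one (fun hdvd => by
      have := Nat.le_of_dvd (by norm_num) hdvd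
      omega)
  have hkum := kummer (p := p) h5
  -- assemble the final chain
  have main : Aeq ((p:ℝ)^(-(4:ℤ))) ((Nat.choose (2*p-1) (p-1) : ℕ) : ℚ_[p])
      (1 - (2/3)*(p:ℚ_[p])^3*B1) := by
    refine hstep1.trans ?_
    rw [hsum2]
    -- now : 1 + p² * U ≈ 1 - (2/3) p³ B1
    have step2 : Aeq ((p:ℝ)^(-(4:ℤ))) (1 + (p:ℚ_[p])^2 * ∑ k ∈ Ico 1 p, gk p k)
        (1 + (p:ℚ_[p])^2 * (S2 - 2*S1 - (p:ℚ_[p])*S3)) := by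
      refine Aeq.add (Aeq.of_eq hc4 rfl) ?_
      have := Aeq.smul ((p:ℚ_[p])^2) hUsum
      rw [hpp2, hzz] at this
      exact this
    refine step2.trans ?_
    have step3 : Aeq ((p:ℝ)^(-(4:ℤ))) (1 + (p:ℚ_[p])^2 * (S2 - 2*S1 - (p:ℚ_[p])*S3))
        (1 + ((p:ℚ_[p])^3 * B2 - 2*(p:ℚ_[p])^3*B1 - 0)) := by
      refine Aeq.add (Aeq.of_eq hc4 rfl) ?_
      have hrw : (p:ℚ_[p])^2 * (S2 - 2*S1 - (p:ℚ_[p])*S3)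
          = (p:ℚ_[p])^2 * S2 - (2*(p:ℚ_[p])^2) * S1 - (p:ℚ_[p])^3 * S3 := by ring
      rw [hrw]
      refine Aeq.sub (Aeq.sub ?_ ?_) ?_
      · -- p² S2 ≈ p³ B2
        have := Aeq.smul ((p:ℚ_[p])^2) (hSB2 : Aeq ((p:ℝ)^(-(2:ℤ))) S2 ((p:ℚ_[p])*B2))
        rw [hpp2, hzz] at this
        have he : (p:ℚ_[p])^2 * ((p:ℚ_[p])*B2) = (p:ℚ_[p])^3 * B2 := by ring
        rwa [he] at this
      · -- 2p² S1 ≈ 2p³ B1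
        have := Aeq.smul (2*(p:ℚ_[p])^2) (hSB1 : Aeq ((p:ℝ)^(-(2:ℤ))) S1 ((p:ℚ_[p])*B1))
        have hz : ‖2*(p:ℚ_[p])^2‖ ≤ (p:ℝ)^(-(2:ℤ)) :=
          norm_mul_le_one_mul _ _ h2le (le_of_eq hpp2)
        have hzc : ‖2*(p:ℚ_[p])^2‖ * (p:ℝ)^(-(2:ℤ)) ≤ (p:ℝ)^(-(4:ℤ)) := by
          calc ‖2*(p:ℚ_[p])^2‖ * (p:ℝ)^(-(2:ℤ)) ≤ (p:ℝ)^(-(2:ℤ)) * (p:ℝ)^(-(2:ℤ)) :=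
                mul_le_mul_of_nonneg_right hz hc2
            _ = (p:ℝ)^(-(4:ℤ)) := hzz
        have h2 := this.weaken hzc
        have he : 2*(p:ℚ_[p])^2 * ((p:ℚ_[p])*B1) = 2*(p:ℚ_[p])^3*B1 := by ring
        rwa [he] at h2
      · -- p³ S3 ≈ 0
        unfold Aeq
        rw [sub_zero, norm_mul, hpp3]
        calc (p:ℝ)^(-(3:ℤ)) * ‖S3‖ ≤ (p:ℝ)^(-(3:ℤ)) * (p:ℝ)^(-(1:ℤ)) :=
              mul_le_mul_of_nonneg_left hSB3 (by positivity)
          _ = (p:ℝ)^(-(4:ℤ)) := hz31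
    refine step3.trans ?_
    -- replace B2 by (4/3) B1 using Kummer
    have step4 : Aeq ((p:ℝ)^(-(4:ℤ))) (1 + ((p:ℚ_[p])^3 * B2 - 2*(p:ℚ_[p])^3*B1 - 0))
        (1 - (2/3)*(p:ℚ_[p])^3*B1) := by
      unfold Aeq
      have he : (1 + ((p:ℚ_[p])^3 * B2 - 2*(p:ℚ_[p])^3*B1 - 0)) - (1 - (2/3)*(p:ℚ_[p])^3*B1)
          = ((3:ℚ_[p])⁻¹*(p:ℚ_[p])^3) * (3*B2 - 4*B1) := by
        have h3 : (3:ℚ_[p]) ≠ 0 := by norm_num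
        field_simp
        ring
      rw [he, norm_mul, norm_mul, norm_inv, h3norm, inv_one, one_mul, hpp3]
      calc (p:ℝ)^(-(3:ℤ)) * ‖3*B2 - 4*B1‖ ≤ (p:ℝ)^(-(3:ℤ)) * (p:ℝ)^(-(1:ℤ)) :=
            mul_le_mul_of_nonneg_left hkum (by positivity)
        _ = (p:ℝ)^(-(4:ℤ)) := hz31
    exact step4
  -- final : rewrite the goal
  have hfinal : (((Nat.choose (2*p-1) (p-1) : ℚ) - 1 + (2/3) * (p:ℚ)^3 * bernoulli (p-3) : ℚ) : ℚ_[p])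
      = ((Nat.choose (2*p-1) (p-1) : ℕ) : ℚ_[p]) - (1 - (2/3)*(p:ℚ_[p])^3*B1) := by
    rw [hB1d]
    push_cast
    ring
  rw [hfinal]
  exact main

end Gl

/-- Glaisher's refinement of Wolstenholme's theorem. -/
theorem glaisher_refinement (p : ℕ) (hp : p.Prime) (h5 : 5 ≤ p) :
    ((Nat.choose (2 * p - 1) (p - 1) : ℚ) - 1
        + (2 / 3) * (p : ℚ) ^ 3 * bernoulli (p - 3)) = 0 ∨
      4 ≤ padicValRat p
        ((Nat.choose (2 * p - 1) (p - 1) : ℚ) - 1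
          + (2 / 3) * (p : ℚ) ^ 3 * bernoulli (p - 3)) := by
  haveI : Fact p.Prime := ⟨hp⟩
  set X : ℚ := (Nat.choose (2 * p - 1) (p - 1) : ℚ) - 1
      + (2 / 3) * (p : ℚ) ^ 3 * bernoulli (p - 3) with hX
  rcases eq_or_ne X 0 with h0 | h0
  · exact Or.inl h0
  right
  have hnorm : ‖(X : ℚ_[p])‖ ≤ (p:ℝ)^(-(4:ℤ)) := Gl.main_bound h5
  rw [Padic.eq_padicNorm, padicNorm.eq_zpow_of_nonzero h0] at hnorm
  have hP1 : (1:ℝ) < p := by exact_mod_cast hp.one_lt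
  have hcast : (((p:ℚ) ^ (-padicValRat p X) : ℚ) : ℝ) = (p:ℝ) ^ (-padicValRat p X) := by
    push_cast
    rfl
  rw [hcast] at hnorm
  have := (zpow_le_zpow_iff_right₀ hP1).1 hnorm
  omega
end
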